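/- arXiv:2106.07073 — 5 statements merged into one kernel-verified Lean document; each statement's English description precedes it below -/
import Mathlib

section
/- Let μ = Σ_{λ∈Λ} p(λ) δ_λ, with p(λ) ∈ ℂ, be an almost periodic measure on ℝ^d with uniformly discrete support Λ. Then the masses p(λ) are uniformly bounded: sup_{λ∈Λ} |p(λ)| < ∞. -/
open Complex SchwartzMap Metric Set MeasureTheory
open scoped ContDiff ENNReal Pointwise Real

noncomputable section

/-- Euclidean space `ℝ^d`. -/
abbrev Ed (d : ℕ) : Type := EuclideanSpace ℝ (Fin d)

/-- Temperate distributions: continuous linear functionals on the Schwartz space. -/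
abbrev TempDist (d : ℕ) : Type := 𝓢(Ed d, ℂ) →L[ℂ] ℂ

namespace Paper

variable {d : ℕ}

/-- A set is locally finite if its intersection with every ball is finite. -/
def IsLocallyFinite (A : Set (Ed d)) : Prop :=
  ∀ (x : Ed d) (r : ℝ), (A ∩ Metric.ball x r).Finite

/-- The separating constant `η(A) = inf {|x - x'| : x, x' ∈ A, x ≠ x'}`
(as an extended real, so that `η(A) = ∞` when `A` has at most one point). -/
def eta (A : Set (Ed d)) : ℝ≥0∞ :=
  ⨅ (x : A) (y : A) (_ : (x : Ed d) ≠ (y : Ed d)), edist (x : Ed d) (y : Ed d)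

/-- A set is uniformly discrete if it is locally finite and `η(A) > 0`. -/
def IsUniformlyDiscrete (A : Set (Ed d)) : Prop :=
  IsLocallyFinite A ∧ 0 < eta A

/-- A locally finite set is of bounded density if `sup_x #(A ∩ B(x,1)) < ∞`. -/
def HasBoundedDensity (A : Set (Ed d)) : Prop :=
  ∃ C : ℕ, ∀ x : Ed d, (A ∩ Metric.ball x 1).Finite ∧ (A ∩ Metric.ball x 1).ncard ≤ C

/-- A full-rank lattice in `ℝ^d`: the image of `ℤ^d` under an invertible linear operator,
equivalently the integer span of a basis. -/
def IsFullRankLattice (L : Set (Ed d)) : Prop :=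
  ∃ b : Module.Basis (Fin d) ℝ (Ed d),
    L = Set.range (fun n : Fin d → ℤ => ∑ i : Fin d, (n i : ℝ) • b i)

/-- The support of a temperate distribution: `x` is in the support iff `f` does not
vanish near `x`, i.e. for every open `U ∋ x` there is a test function supported
in `U` on which `f` is nonzero. -/
def distSupport (f : TempDist d) : Set (Ed d) :=
  {x | ∀ U : Set (Ed d), IsOpen U → x ∈ U →
     ∃ φ : 𝓢(Ed d, ℂ), tsupport (⇑φ) ⊆ U ∧ f φ ≠ 0}

/-- The Fourier transform of a temperate distribution, `f̂(φ) = f(φ̂)`. -/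
def fourierT (f : TempDist d) : TempDist d :=
  f.comp (fourierTransformCLM ℂ)

/-- The spectrum of a temperate distribution: the support of its Fourier transform. -/
def spectrumOf (f : TempDist d) : Set (Ed d) := distSupport (fourierT f)

/-- The partial derivative `∂/∂x_i` of a function on `ℝ^d`. -/
def pderiv1 (i : Fin d) (φ : Ed d → ℂ) : Ed d → ℂ :=
  fun x => fderiv ℝ φ x (EuclideanSpace.single i 1)

/-- The multi-index partial derivative `D^k = ∂^{k₁}_{x₁} ⋯ ∂^{k_d}_{x_d}`. -/
def multiDeriv (k : Fin d → ℕ) (φ : Ed d → ℂ) : Ed d → ℂ :=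
  ((List.ofFn fun i : Fin d => (pderiv1 i)^[k i]).foldr (· ∘ ·) id) φ

/-- The action of `D^k δ_λ` on a test function: `(D^k δ_λ)(φ) = (-1)^{‖k‖} (D^k φ)(λ)`. -/
def diracTerm (k : Fin d → ℕ) (l : Ed d) (φ : 𝓢(Ed d, ℂ)) : ℂ :=
  (-1 : ℂ) ^ (∑ i : Fin d, k i) * multiDeriv k (⇑φ) l

/-- `f = Σ_{λ∈Λ} Σ_k p_k(λ) D^k δ_λ`, with the inner sum finite for each `λ`. -/
def HasRep (f : TempDist d) (Λ : Set (Ed d)) (p : Ed d → (Fin d → ℕ) → ℂ) : Prop :=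
  (∀ l : Ed d, l ∉ Λ → ∀ k, p l k = 0) ∧
  (∀ l : Ed d, {k : Fin d → ℕ | p l k ≠ 0}.Finite) ∧
  (∀ φ : 𝓢(Ed d, ℂ),
    HasSum (fun l : Λ => ∑' k : Fin d → ℕ, p (l : Ed d) k * diracTerm k (l : Ed d) φ) (f φ))

/-- A relatively dense subset of a pseudometric space. -/
def RelDense {X : Type*} [PseudoMetricSpace X] (T : Set X) : Prop :=
  ∃ R : ℝ, 0 < R ∧ ∀ x : X, ∃ τ ∈ T, dist x τ ≤ R

/-- Bohr almost periodic function (with values in `ℂ`): for every `ε > 0` the set of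
`ε`-almost periods is relatively dense. -/
def APFun {V : Type*} [SeminormedAddCommGroup V] (g : V → ℂ) : Prop :=
  Continuous g ∧ ∀ ε : ℝ, 0 < ε →
    RelDense {τ : V | ∀ t : V, ‖g (t + τ) - g t‖ < ε}

/-- Almost periodicity of the purely point measure `μ = Σ_{λ∈Λ} p(λ) δ_λ`:
for every `C^∞` function `φ` with compact support, the function
`t ↦ (μ(y), φ(t−y)) = Σ_{λ∈Λ} p(λ) φ(t−λ)` is almost periodic. -/
def APMeasure (Λ : Set (Ed d)) (p : Ed d → ℂ) : Prop :=
  ∀ φ : Ed d → ℂ, ContDiff ℝ ∞ φ → HasCompactSupport φ →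
    APFun (fun t : Ed d => ∑' l : Λ, p (l : Ed d) * φ (t - (l : Ed d)))

/-- `Λ` is contained in a finite union of translates of (several) full-rank lattices. -/
def SubsetFiniteUnionOfTranslates (Λ : Set (Ed d)) : Prop :=
  ∃ (J : ℕ) (L : Fin J → Set (Ed d)) (v : Fin J → Ed d),
    (∀ j, IsFullRankLattice (L j)) ∧
    Λ ⊆ ⋃ j : Fin J, (fun x => v j + x) '' (L j)

/-- `Λ` is a finite union of translates of (several) full-rank lattices. -/
def EqFiniteUnionOfTranslates (Λ : Set (Ed d)) : Prop :=
  ∃ (J : ℕ) (L : Fin J → Set (Ed d)) (v : Fin J → Ed d),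
    (∀ j, IsFullRankLattice (L j)) ∧
    Λ = ⋃ j : Fin J, (fun x => v j + x) '' (L j)

end Paper

open Paper
open scoped RealInnerProductSpace


/-- Proposition 2 i): the masses of an almost periodic measure
`μ = Σ_{λ∈Λ} p(λ) δ_λ` with uniformly discrete support are uniformly bounded. -/
theorem statement8 (d : ℕ) (Λ : Set (Ed d)) (p : Ed d → ℂ)
    (hΛ : IsUniformlyDiscrete Λ)
    (hsupp : ∀ l : Ed d, l ∉ Λ → p l = 0)
    (hap : APMeasure Λ p) :
    ∃ C : ℝ, ∀ l ∈ Λ, ‖p l‖ ≤ C := by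
  classical
  -- choose a positive real separation radius r with r ≤ eta Λ (in ℝ≥0∞)
  set ε : ℝ≥0∞ := min (eta Λ) 1 with hε
  have hε0 : 0 < ε := lt_min hΛ.2 zero_lt_one
  have hεtop : ε ≠ ⊤ := ne_top_of_le_ne_top (by simp) (min_le_right _ _)
  set r : ℝ := ε.toReal with hrdef
  have hr : 0 < r := ENNReal.toReal_pos hε0.ne' hεtop
  have hsep : ∀ x ∈ Λ, ∀ y ∈ Λ, x ≠ y → r ≤ dist x y := by
    intro x hx y hy hxy
    have h1 : ε ≤ edist x y := by
      refine le_trans (min_le_left _ _) ?_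
      exact iInf_le_of_le ⟨x, hx⟩ (iInf_le_of_le ⟨y, hy⟩ (iInf_le_of_le hxy le_rfl))
    have := ENNReal.toReal_mono (edist_ne_top x y) h1
    simpa [dist_edist] using this
  -- bump function supported in ball of radius r
  obtain ⟨f, hfin, hfout⟩ : ∃ f : ContDiffBump (0 : Ed d), f.rIn = r / 2 ∧ f.rOut = r :=
    ⟨⟨r / 2, r, by positivity, by linarith⟩, rfl, rfl⟩
  set φ : Ed d → ℂ := fun x => ((f x : ℝ) : ℂ) with hφ
  have hsm : ContDiff ℝ ∞ φ := Complex.ofRealCLM.contDiff.comp f.contDiff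
  have hcs : HasCompactSupport φ :=
    f.hasCompactSupport.comp_left (g := Complex.ofReal) (by simp)
  obtain ⟨hcont, hper⟩ := hap φ hsm hcs
  set g : Ed d → ℂ := fun t : Ed d => ∑' l : Λ, p (l : Ed d) * φ (t - (l : Ed d)) with hg
  -- g is bounded
  obtain ⟨R, hR, hRd⟩ := hper 1 one_pos
  obtain ⟨M, hM⟩ := (isCompact_closedBall (0 : Ed d) R).exists_bound_of_continuousOn
    hcont.continuousOn
  refine ⟨M + 1, ?_⟩
  intro l hl
  -- g l = p l
  have hgl : g l = p l := by
    have hsingle : ∀ b : Λ, b ≠ (⟨l, hl⟩ : Λ) → p (b : Ed d) * φ (l - (b : Ed d)) = 0 := by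
      intro b hb
      have hbl : (b : Ed d) ≠ l := fun h => hb (Subtype.ext h)
      have hd : r ≤ dist (l - (b : Ed d)) 0 := by
        rw [dist_zero_right]
        have := hsep (b : Ed d) b.2 l hl hbl
        rwa [dist_comm, dist_eq_norm] at this
      have : φ (l - (b : Ed d)) = 0 := by
        have := f.zero_of_le_dist (x := l - (b : Ed d)) (by rw [hfout]; exact hd)
        simp [hφ, this]
      rw [this, mul_zero]
    have := tsum_eq_single (L := SummationFilter.unconditional Λ) (f := fun b : Λ => p (b : Ed d) * φ (l - (b : Ed d)))
      (⟨l, hl⟩ : Λ) hsingle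
    have hφ0 : φ (l - l) = 1 := by
      have : f (0 : Ed d) = 1 :=
        f.one_of_mem_closedBall (by simp [hfin, le_of_lt (by positivity : (0:ℝ) < r / 2)])
      simp [hφ, sub_self, this]
    rw [hg]
    simp only [this, hφ0, mul_one]
  -- bound ‖g l‖ using almost periodicity
  obtain ⟨τ, hτ, hτd⟩ := hRd l
  have h1 : ‖g ((l - τ) + τ) - g (l - τ)‖ < 1 := hτ (l - τ)
  have h2 : ‖g (l - τ)‖ ≤ M := by
    refine hM _ ?_
    simp only [Metric.mem_closedBall, dist_zero_right]
    have : ‖l - τ‖ = dist l τ := (dist_eq_norm l τ).symm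
    rw [this]; exact hτd
  have h3 : (l - τ) + τ = l := by abel
  rw [h3] at h1
  calc ‖p l‖ = ‖g l‖ := by rw [hgl]
    _ = ‖g (l - τ) + (g l - g (l - τ))‖ := by ring_nf
    _ ≤ ‖g (l - τ)‖ + ‖g l - g (l - τ)‖ := norm_add_le _ _
    _ ≤ M + 1 := add_le_add h2 h1.le

end
end

section
/- Let μ = Σ_{λ∈Λ} p(λ) δ_λ, with p(λ) ∈ ℂ, be an almost periodic measure on ℝ^d with uniformly discrete support Λ. Then the measure |μ| = Σ_{λ∈Λ} |p(λ)| δ_λ is almost periodic. -/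
open Complex SchwartzMap Metric Set MeasureTheory
open scoped ContDiff ENNReal Pointwise Real

noncomputable section

open Paper
open scoped RealInnerProductSpace


namespace S9

variable {d : ℕ}

lemma reldense_mono {X : Type*} [PseudoMetricSpace X] {T T' : Set X}
    (h : T ⊆ T') (hT : RelDense T) : RelDense T' := by
  obtain ⟨R, hR, hx⟩ := hT
  exact ⟨R, hR, fun x => by obtain ⟨τ, hτ, hd⟩ := hx x; exact ⟨τ, h hτ, hd⟩⟩

lemma sep_of_eta {Λ : Set (Ed d)} (h : 0 < eta Λ) :
    ∃ r : ℝ, 0 < r ∧ r ≤ 1 ∧ ∀ x ∈ Λ, ∀ y ∈ Λ, x ≠ y → r ≤ dist x y := by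
  refine ⟨(min (eta Λ) 1).toReal, ?_, ?_, ?_⟩
  · exact ENNReal.toReal_pos (lt_min h zero_lt_one).ne'
      ((min_le_right (eta Λ) 1).trans_lt ENNReal.one_lt_top).ne
  · calc (min (eta Λ) 1).toReal ≤ (1 : ℝ≥0∞).toReal :=
          ENNReal.toReal_mono ENNReal.one_ne_top (min_le_right _ _)
      _ = 1 := by simp
  · intro x hx y hy hxy
    have h1 : eta Λ ≤ edist x y := by
      refine le_trans ?_ (le_refl _)
      exact le_trans (iInf_le _ (⟨x, hx⟩ : Λ)) (le_trans (iInf_le _ (⟨y, hy⟩ : Λ)) (iInf_le _ hxy))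
    have h2 : min (eta Λ) 1 ≤ edist x y := le_trans (min_le_left _ _) h1
    have := ENNReal.toReal_mono (edist_ne_top x y) h2
    rwa [← dist_edist] at this

lemma count_bound {Λ : Set (Ed d)} (hfin : IsLocallyFinite Λ) {r : ℝ} (hr : 0 < r)
    (hsep : ∀ x ∈ Λ, ∀ y ∈ Λ, x ≠ y → r ≤ dist x y) (R : ℝ) :
    ∃ N : ℕ, ∀ x : Ed d, (Λ ∩ ball x R).ncard ≤ N := by
  classical
  set v : ℝ≥0∞ := volume (ball (0 : Ed d) (r/2)) with hv
  set V : ℝ≥0∞ := volume (ball (0 : Ed d) (R + r/2)) with hV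
  have hv0 : v ≠ 0 := (measure_ball_pos _ _ (half_pos hr)).ne'
  have hVt : V ≠ ⊤ := measure_ball_lt_top.ne
  refine ⟨Nat.ceil (V / v).toReal, fun x => ?_⟩
  have hfx := hfin x R
  set s : Finset (Ed d) := hfx.toFinset with hs
  have hsub : ∀ y ∈ s, y ∈ Λ ∩ ball x R := fun y hy => hfx.mem_toFinset.mp hy
  have hdisj : (s : Set (Ed d)).PairwiseDisjoint (fun y => ball y (r/2)) := by
    intro a ha b hb hab
    have ha' := hsub a ha
    have hb' := hsub b hb
    exact ball_disjoint_ball (by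
      have := hsep a ha'.1 b hb'.1 hab; linarith)
  have hmeas : ∀ y ∈ s, MeasurableSet (ball y (r/2)) := fun y _ => measurableSet_ball
  have hsum : ∑ y ∈ s, volume (ball y (r/2)) = volume (⋃ y ∈ s, ball y (r/2)) :=
    (measure_biUnion_finset hdisj hmeas).symm
  have hsubset : (⋃ y ∈ s, ball y (r/2)) ⊆ ball x (R + r/2) := by
    intro z hz
    simp only [mem_iUnion] at hz
    obtain ⟨y, hy, hzy⟩ := hz
    have hy' := hsub y hy
    have : dist z x ≤ dist z y + dist y x := dist_triangle _ _ _
    have h2 : dist y x < R := by simpa [dist_comm] using hy'.2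
    simp only [mem_ball] at hzy ⊢
    linarith
  have hcard : (s.card : ℝ≥0∞) * v ≤ V := by
    have : ∑ y ∈ s, volume (ball y (r/2)) = s.card * v := by
      rw [Finset.sum_congr rfl (fun y _ => Measure.addHaar_ball_center volume y (r/2))]
      simp [mul_comm, hv]
    rw [← this, hsum]
    calc volume (⋃ y ∈ s, ball y (r/2)) ≤ volume (ball x (R + r/2)) := measure_mono hsubset
      _ = V := Measure.addHaar_ball_center volume x _
  have hle : (s.card : ℝ≥0∞) ≤ V / v :=
    ENNReal.le_div_iff_mul_le (Or.inl hv0) (Or.inr hVt) |>.mpr hcard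
  have hfin2 : V / v ≠ ⊤ := (ENNReal.div_lt_top hVt hv0).ne
  have h3 : (s.card : ℝ) ≤ (V / v).toReal := by
    have := ENNReal.toReal_mono hfin2 hle
    simpa using this
  have h4 : (s.card : ℝ) ≤ (Nat.ceil (V / v).toReal : ℝ) := h3.trans (Nat.le_ceil _)
  rw [Set.ncard_eq_toFinset_card _ hfx]
  exact_mod_cast h4


lemma tsum_eq_finsetSum {Λ : Set (Ed d)} (q f : Ed d → ℂ)
    (s : Finset (Ed d)) (hsΛ : ∀ x ∈ s, x ∈ Λ)
    (hmem : ∀ x ∈ Λ, q x * f x ≠ 0 → x ∈ s) :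
    ∑' l : Λ, q (l : Ed d) * f (l : Ed d) = ∑ x ∈ s, q x * f x := by
  classical
  have h1 : ∑' l : Λ, q (l : Ed d) * f (l : Ed d)
      = ∑ l ∈ s.subtype (· ∈ Λ), q (l : Ed d) * f (l : Ed d) := by
    refine tsum_eq_sum ?_
    intro b hb
    rw [Finset.mem_subtype] at hb
    by_contra h
    exact hb (hmem b b.2 h)
  rw [h1]
  have h2 : ∑ x ∈ (s.subtype (· ∈ Λ)).map (Function.Embedding.subtype _),
      q x * f x = ∑ l ∈ s.subtype (· ∈ Λ), q (l : Ed d) * f (l : Ed d) :=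
    Finset.sum_map _ _ _
  rw [Finset.subtype_map] at h2
  rw [Finset.filter_true_of_mem hsΛ] at h2
  exact h2.symm

lemma apfun_bounded {g : Ed d → ℂ} (h : APFun g) : ∃ B : ℝ, 0 ≤ B ∧ ∀ t, ‖g t‖ ≤ B := by
  obtain ⟨hc, hap⟩ := h
  obtain ⟨R, hR, hx⟩ := hap 1 one_pos
  obtain ⟨C, hC⟩ := (isCompact_closedBall (0 : Ed d) R).exists_bound_of_continuousOn
    (hc.continuousOn (s := closedBall 0 R))
  refine ⟨max C 0 + 1, by positivity, fun t => ?_⟩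
  obtain ⟨τ, hτ, hd⟩ := hx t
  have h1 : ‖g ((t - τ) + τ) - g (t - τ)‖ < 1 := hτ (t - τ)
  have h2 : t - τ ∈ closedBall (0 : Ed d) R := by
    simp only [mem_closedBall, dist_zero_right]
    calc ‖t - τ‖ = dist t τ := (dist_eq_norm t τ).symm
      _ ≤ R := hd
  have h3 : ‖g (t - τ)‖ ≤ C := hC _ h2
  have h4 : (t - τ) + τ = t := by abel
  rw [h4] at h1
  calc ‖g t‖ ≤ ‖g (t - τ)‖ + ‖g t - g (t - τ)‖ := by
        have := norm_add_le (g (t - τ)) (g t - g (t - τ)); simpa using this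
    _ ≤ C + 1 := add_le_add h3 h1.le
    _ ≤ max C 0 + 1 := by simp [le_max_left]

lemma g_at_point {Λ : Set (Ed d)} {p : Ed d → ℂ} {r ρ : ℝ}
    (hsep : ∀ x ∈ Λ, ∀ y ∈ Λ, x ≠ y → r ≤ dist x y) (hρr : ρ ≤ r)
    (ψ : Ed d → ℝ) (hψ0 : ψ 0 = 1) (hψsupp : ∀ v, ψ v ≠ 0 → ‖v‖ < ρ)
    {l₀ : Ed d} (hl₀ : l₀ ∈ Λ) :
    ∑' l : Λ, p (l : Ed d) * ((ψ (l₀ - (l : Ed d)) : ℝ) : ℂ) = p l₀ := by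
  rw [tsum_eq_single (⟨l₀, hl₀⟩ : Λ) ?_]
  · simp [sub_self, hψ0]
  · intro l hl
    have hne : (l : Ed d) ≠ l₀ := fun he => hl (Subtype.ext he)
    have hz : ψ (l₀ - (l : Ed d)) = 0 := by
      by_contra h0
      have h1 := hψsupp _ h0
      have h2 : dist l₀ (l : Ed d) < r := by
        rw [dist_eq_norm]; linarith
      have h3 := hsep l₀ hl₀ (l : Ed d) l.2 hne.symm
      linarith
    simp [hz]

/-- Key transfer lemma: if `τ` is an `ε'`-almost period of `G = Σ p(l) ψ(·-l)` with a small
bump `ψ`, then every heavy point of `Λ` has a companion near its translate. -/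
lemma lemA {Λ : Set (Ed d)} {p : Ed d → ℂ} {r δ ε' : ℝ}
    (hsep : ∀ x ∈ Λ, ∀ y ∈ Λ, x ≠ y → r ≤ dist x y)
    (hδ : 0 < δ) (hδr : 4*δ < r)
    (ψ : Ed d → ℝ) (hψ0 : ψ 0 = 1) (hψ1 : ∀ v, ψ v ≤ 1) (hψnn : ∀ v, 0 ≤ ψ v)
    (hψsupp : ∀ v, ψ v ≠ 0 → ‖v‖ < 2*δ)
    {τ : Ed d}
    (hτ : ∀ s : Ed d, ‖(∑' l : Λ, p (l : Ed d) * ((ψ (s + τ - (l : Ed d)) : ℝ) : ℂ))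
        - ∑' l : Λ, p (l : Ed d) * ((ψ (s - (l : Ed d)) : ℝ) : ℂ)‖ < ε')
    {x : Ed d} (hx : x ∈ Λ) (hheavy : ε' ≤ ‖p x‖) :
    ∃ y ∈ Λ, dist (x + τ) y < 2*δ ∧ ‖p x‖ ≤ ‖p y‖ + ε' := by
  have hGx : ∑' l : Λ, p (l : Ed d) * ((ψ (x - (l : Ed d)) : ℝ) : ℂ) = p x :=
    g_at_point (ρ := 2*δ) hsep (by linarith) ψ hψ0 hψsupp hx
  have hτx := hτ x
  rw [hGx] at hτx
  by_cases hex : ∃ l : Λ, p (l : Ed d) * ((ψ (x + τ - (l : Ed d)) : ℝ) : ℂ) ≠ 0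
  · obtain ⟨l₀, hl₀⟩ := hex
    have hψne : ψ (x + τ - (l₀ : Ed d)) ≠ 0 := by
      intro h0; apply hl₀; rw [h0]; simp
    have hd₀ : dist (x + τ) (l₀ : Ed d) < 2*δ := by
      rw [dist_eq_norm]; exact hψsupp _ hψne
    have huniq : ∀ l : Λ, l ≠ l₀ → p (l : Ed d) * ((ψ (x + τ - (l : Ed d)) : ℝ) : ℂ) = 0 := by
      intro l hl
      by_contra h0
      have hψne' : ψ (x + τ - (l : Ed d)) ≠ 0 := by
        intro h1; apply h0; rw [h1]; simp
      have hd : dist (x + τ) (l : Ed d) < 2*δ := by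
        rw [dist_eq_norm]; exact hψsupp _ hψne'
      have hll : dist (l : Ed d) (l₀ : Ed d) < r := by
        calc dist (l : Ed d) (l₀ : Ed d) ≤ dist (l : Ed d) (x + τ) + dist (x + τ) (l₀ : Ed d) :=
              dist_triangle _ _ _
          _ < 2*δ + 2*δ := by rw [dist_comm (l : Ed d) (x + τ)]; linarith
          _ < r := by linarith
      rcases eq_or_ne (l : Ed d) (l₀ : Ed d) with he | hne
      · exact hl (Subtype.ext he)
      · have := hsep _ l.2 _ l₀.2 hne; linarith
    have hGxt : ∑' l : Λ, p (l : Ed d) * ((ψ (x + τ - (l : Ed d)) : ℝ) : ℂ)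
        = p (l₀ : Ed d) * ((ψ (x + τ - (l₀ : Ed d)) : ℝ) : ℂ) := tsum_eq_single l₀ huniq
    rw [hGxt] at hτx
    refine ⟨(l₀ : Ed d), l₀.2, hd₀, ?_⟩
    have h1 : ‖p x‖ - ‖p (l₀ : Ed d) * ((ψ (x + τ - (l₀ : Ed d)) : ℝ) : ℂ)‖
        ≤ ‖p (l₀ : Ed d) * ((ψ (x + τ - (l₀ : Ed d)) : ℝ) : ℂ) - p x‖ := by
      have := norm_sub_norm_le (p (l₀ : Ed d) * ((ψ (x + τ - (l₀ : Ed d)) : ℝ) : ℂ)) (p x)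
      have h2 := abs_norm_sub_norm_le (p (l₀ : Ed d) * ((ψ (x + τ - (l₀ : Ed d)) : ℝ) : ℂ)) (p x)
      have := abs_le.mp h2
      linarith [this.1]
    have h2 : ‖p (l₀ : Ed d) * ((ψ (x + τ - (l₀ : Ed d)) : ℝ) : ℂ)‖ ≤ ‖p (l₀ : Ed d)‖ := by
      rw [norm_mul]
      have h3 : ‖((ψ (x + τ - (l₀ : Ed d)) : ℝ) : ℂ)‖ ≤ 1 := by
        rw [Complex.norm_real, Real.norm_eq_abs, _root_.abs_of_nonneg (hψnn _)]
        exact hψ1 _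
      calc ‖p (l₀ : Ed d)‖ * ‖((ψ (x + τ - (l₀ : Ed d)) : ℝ) : ℂ)‖
          ≤ ‖p (l₀ : Ed d)‖ * 1 := by
            exact mul_le_mul_of_nonneg_left h3 (norm_nonneg _)
        _ = ‖p (l₀ : Ed d)‖ := mul_one _
    linarith
  · push_neg at hex
    have hGxt : ∑' l : Λ, p (l : Ed d) * ((ψ (x + τ - (l : Ed d)) : ℝ) : ℂ) = 0 := by
      rw [show (fun l : Λ => p (l : Ed d) * ((ψ (x + τ - (l : Ed d)) : ℝ) : ℂ))
        = fun _ => 0 from funext hex]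
      exact tsum_zero
    rw [hGxt] at hτx
    rw [zero_sub, norm_neg] at hτx
    linarith

end S9

set_option maxHeartbeats 1600000 in
/-- Proposition 2 ii): if `μ = Σ_{λ∈Λ} p(λ) δ_λ` is an almost periodic
measure with uniformly discrete support, then `|μ| = Σ_{λ∈Λ} |p(λ)| δ_λ` is almost
periodic as well. -/
theorem statement9 (d : ℕ) (Λ : Set (Ed d)) (p : Ed d → ℂ)
    (hΛ : IsUniformlyDiscrete Λ)
    (hsupp : ∀ l : Ed d, l ∉ Λ → p l = 0)
    (hap : APMeasure Λ p) :
    APMeasure Λ (fun l => ((‖p l‖ : ℝ) : ℂ)) := by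
  classical
  obtain ⟨hLF, hη⟩ := hΛ
  obtain ⟨r, hr0, hr1, hsep⟩ := S9.sep_of_eta hη
  intro φ hφ hφc
  -- bound on the support of φ
  obtain ⟨M₀, hM₀⟩ := hφc.isBounded.subset_closedBall 0
  set M : ℝ := max M₀ 0 with hM
  have hM0 : 0 ≤ M := le_max_right _ _
  have hMsupp : ∀ x : Ed d, φ x ≠ 0 → ‖x‖ ≤ M := by
    intro x hx
    have h1 : x ∈ tsupport φ := subset_closure hx
    have h2 := hM₀ h1
    simp only [mem_closedBall, dist_zero_right] at h2
    exact h2.trans (le_max_left _ _)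
  -- bound on φ
  obtain ⟨Cφ₀, hCφ₀⟩ := hφ.continuous.bounded_above_of_compact_support hφc
  set Cφ : ℝ := max Cφ₀ 0 with hCφdef
  have hCφ0 : 0 ≤ Cφ := le_max_right _ _
  have hCφ : ∀ x, ‖φ x‖ ≤ Cφ := fun x => (hCφ₀ x).trans (le_max_left _ _)
  -- counting bound
  obtain ⟨N, hN⟩ := S9.count_bound hLF hr0 hsep (M + 2)
  -- bound on ‖p‖ over Λ
  have hb₀lt : r/8 < r/4 := by linarith
  set b₀ : ContDiffBump (0 : Ed d) := ⟨r/8, r/4, by linarith, hb₀lt⟩ with hb₀def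
  have hg₀ := hap (fun x => ((b₀ x : ℝ) : ℂ))
      (Complex.ofRealCLM.contDiff.comp b₀.contDiff)
      (b₀.hasCompactSupport.comp_left (g := Complex.ofReal) Complex.ofReal_zero)
  obtain ⟨B, hB0, hB⟩ := S9.apfun_bounded hg₀
  have hpB : ∀ x ∈ Λ, ‖p x‖ ≤ B := by
    intro x hx
    have h1 := hB x
    have h2 : ∑' l : Λ, p (l : Ed d) * ((b₀ (x - (l : Ed d)) : ℝ) : ℂ) = p x := by
      refine S9.g_at_point (ρ := r/4) hsep (by linarith) ⇑b₀ ?_ ?_ hx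
      · exact b₀.one_of_mem_closedBall (mem_closedBall_self b₀.rIn_pos.le)
      · intro v hv
        have : v ∈ Function.support b₀ := hv
        rw [b₀.support_eq] at this
        simpa [mem_ball_zero_iff] using this
    rw [h2] at h1
    exact h1
  constructor
  · -- continuity
    rw [continuous_iff_continuousAt]
    intro t₀
    set s₀ : Finset (Ed d) := (hLF t₀ (M+2)).toFinset with hs₀def
    have hFt : ∀ t ∈ ball t₀ 1,
        (∑' l : Λ, ((‖p (l : Ed d)‖ : ℝ) : ℂ) * φ (t - (l : Ed d)))
          = ∑ x ∈ s₀, ((‖p x‖ : ℝ) : ℂ) * φ (t - x) := by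
      intro t ht
      refine S9.tsum_eq_finsetSum (fun x => ((‖p x‖ : ℝ) : ℂ)) (fun x => φ (t - x)) s₀ ?_ ?_
      · intro x hx
        exact ((hLF t₀ (M+2)).mem_toFinset.mp hx).1
      · intro x hxΛ hne
        have hφne : φ (t - x) ≠ 0 := fun h0 => hne (by simp [h0])
        have h1 : ‖t - x‖ ≤ M := hMsupp _ hφne
        have h2 : dist t x ≤ M := by rwa [dist_eq_norm]
        have h3 : dist x t₀ < M + 2 := by
          have h4 : dist x t₀ ≤ dist x t + dist t t₀ := dist_triangle _ _ _
          have h5 : dist t t₀ < 1 := by rwa [mem_ball] at ht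
          rw [dist_comm x t] at h4
          linarith
        exact (hLF t₀ (M+2)).mem_toFinset.mpr ⟨hxΛ, by rwa [mem_ball]⟩
    have hcont : Continuous (fun t : Ed d => ∑ x ∈ s₀, ((‖p x‖ : ℝ) : ℂ) * φ (t - x)) :=
      continuous_finset_sum _ (fun x _ =>
        continuous_const.mul (hφ.continuous.comp (continuous_id.sub continuous_const)))
    exact hcont.continuousAt.congr
      (Filter.eventuallyEq_of_mem (ball_mem_nhds t₀ one_pos) (fun t ht => (hFt t ht).symm))
  · -- almost periods
    intro ε hε
    set a : ℝ := N * (4*Cφ + B) with hadef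
    have ha0 : 0 ≤ a := by positivity
    set ε' : ℝ := ε / (a + 1) with hε'def
    have hε'0 : 0 < ε' := by positivity
    have hkey : a * ε' < ε := by
      have h1 : ε' * (a+1) = ε := div_mul_cancel₀ ε (by linarith)
      nlinarith [hε'0]
    -- uniform continuity of φ
    obtain ⟨δ₁, hδ₁0, hδ₁⟩ := Metric.uniformContinuous_iff.mp
      (hφc.uniformContinuous_of_continuous hφ.continuous) ε' hε'0
    set δ : ℝ := min (min (δ₁/2) (1/2)) (r/5) with hδdef
    have hδ0 : 0 < δ := lt_min (lt_min (by linarith) (by norm_num)) (by linarith)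
    have hδδ₁ : 2*δ ≤ δ₁ := by
      have h1 : δ ≤ δ₁/2 := le_trans (min_le_left _ _) (min_le_left _ _)
      linarith
    have hδ1 : 2*δ ≤ 1 := by
      have h1 : δ ≤ 1/2 := le_trans (min_le_left _ _) (min_le_right _ _)
      linarith
    have hδr : 4*δ < r := by
      have h1 : δ ≤ r/5 := min_le_right _ _
      linarith
    -- the bump
    set b : ContDiffBump (0 : Ed d) := ⟨δ, 2*δ, hδ0, by linarith⟩ with hbdef
    have hψ0 : b 0 = 1 := b.one_of_mem_closedBall (mem_closedBall_self hδ0.le)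
    have hψ1 : ∀ v : Ed d, b v ≤ 1 := fun v => b.le_one
    have hψnn : ∀ v : Ed d, 0 ≤ b v := fun v => b.nonneg
    have hψsupp : ∀ v : Ed d, b v ≠ 0 → ‖v‖ < 2*δ := by
      intro v hv
      have : v ∈ Function.support b := hv
      rw [b.support_eq] at this
      simpa [mem_ball_zero_iff] using this
    have hG := hap (fun x => ((b x : ℝ) : ℂ))
      (Complex.ofRealCLM.contDiff.comp b.contDiff)
      (b.hasCompactSupport.comp_left (g := Complex.ofReal) Complex.ofReal_zero)
    refine S9.reldense_mono ?_ (hG.2 ε' hε'0)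
    intro τ hτmem
    have hτ : ∀ s : Ed d, ‖(∑' l : Λ, p (l : Ed d) * ((b (s + τ - (l : Ed d)) : ℝ) : ℂ))
        - ∑' l : Λ, p (l : Ed d) * ((b (s - (l : Ed d)) : ℝ) : ℂ)‖ < ε' := hτmem
    have hτneg : ∀ s : Ed d, ‖(∑' l : Λ, p (l : Ed d) * ((b (s + -τ - (l : Ed d)) : ℝ) : ℂ))
        - ∑' l : Λ, p (l : Ed d) * ((b (s - (l : Ed d)) : ℝ) : ℂ)‖ < ε' := by
      intro s
      have h1 := hτ (s - τ)
      have h2 : s - τ + τ = s := by abel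
      rw [h2] at h1
      rw [← norm_neg] at h1
      have h3 : s + -τ = s - τ := by abel
      rw [h3]
      simpa [neg_sub] using h1
    intro t
    -- the map σ
    set σ : Ed d → Ed d := fun x => if h : ∃ y, y ∈ Λ ∧ dist (x + τ) y < 2*δ
      then h.choose else x with hσdef
    have hσspec : ∀ x, x ∈ Λ → ε' ≤ ‖p x‖ →
        σ x ∈ Λ ∧ dist (x + τ) (σ x) < 2*δ ∧ ‖p x‖ ≤ ‖p (σ x)‖ + ε' := by
      intro x hx hh
      obtain ⟨y, hyΛ, hyd, hyn⟩ := S9.lemA hsep hδ0 hδr ⇑b hψ0 hψ1 hψnn hψsupp hτ hx hh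
      have hex : ∃ y, y ∈ Λ ∧ dist (x + τ) y < 2*δ := ⟨y, hyΛ, hyd⟩
      have hch := hex.choose_spec
      have hσx : σ x = hex.choose := by
        simp only [hσdef]
        rw [dif_pos hex]
      have heq : hex.choose = y := by
        by_contra hne
        have h1 := hsep _ hch.1 _ hyΛ hne
        have h2 : dist hex.choose y ≤ dist hex.choose (x+τ) + dist (x+τ) y := dist_triangle _ _ _
        rw [dist_comm hex.choose (x+τ)] at h2
        linarith [hch.2]
      rw [hσx, heq]
      exact ⟨hyΛ, hyd, hyn⟩
    have hσback : ∀ x, x ∈ Λ → ε' ≤ ‖p x‖ → ‖p (σ x)‖ ≤ ‖p x‖ + ε' := by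
      intro x hx hh
      obtain ⟨hσΛ, hσd, _⟩ := hσspec x hx hh
      by_cases h2 : ε' ≤ ‖p (σ x)‖
      · obtain ⟨w, hwΛ, hwd, hwn⟩ := S9.lemA hsep hδ0 hδr ⇑b hψ0 hψ1 hψnn hψsupp hτneg hσΛ h2
        have hd2 : dist (σ x + -τ) x < 2*δ := by
          have h3 : σ x + -τ - x = -((x + τ) - σ x) := by abel
          rw [dist_eq_norm, h3, norm_neg, ← dist_eq_norm]
          exact hσd
        have hwx : w = x := by
          by_contra hne
          have h3 := hsep _ hwΛ _ hx hne
          have h4 : dist w x ≤ dist w (σ x + -τ) + dist (σ x + -τ) x := dist_triangle _ _ _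
          rw [dist_comm w (σ x + -τ)] at h4
          linarith
        rw [hwx] at hwn
        exact hwn
      · push_neg at h2
        have h3 : 0 ≤ ‖p x‖ := norm_nonneg _
        linarith
    -- finsets
    set sA : Finset (Ed d) := (hLF t (M+2)).toFinset with hsAdef
    set sB : Finset (Ed d) := (hLF (t+τ) (M+1)).toFinset with hsBdef
    have hsAmem : ∀ x, x ∈ sA ↔ x ∈ Λ ∧ dist x t < M+2 := by
      intro x
      rw [hsAdef, (hLF t (M+2)).mem_toFinset]
      exact ⟨fun h => ⟨h.1, by simpa [mem_ball] using h.2⟩,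
        fun h => ⟨h.1, by simpa [mem_ball] using h.2⟩⟩
    have hsBmem : ∀ y, y ∈ sB ↔ y ∈ Λ ∧ dist y (t+τ) < M+1 := by
      intro y
      rw [hsBdef, (hLF (t+τ) (M+1)).mem_toFinset]
      exact ⟨fun h => ⟨h.1, by simpa [mem_ball] using h.2⟩,
        fun h => ⟨h.1, by simpa [mem_ball] using h.2⟩⟩
    set heavy : Ed d → Prop := fun x => ε' ≤ ‖p x‖ with hheavydef
    set sAH : Finset (Ed d) := sA.filter heavy with hsAHdef
    set sAL : Finset (Ed d) := sA.filter (fun x => ¬ heavy x) with hsALdef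
    set sC : Finset (Ed d) := sAH.image σ with hsCdef
    have hsAHprop : ∀ x ∈ sAH, x ∈ Λ ∧ heavy x := by
      intro x hx
      rw [hsAHdef, Finset.mem_filter] at hx
      exact ⟨((hsAmem x).mp hx.1).1, hx.2⟩
    -- cardinalities
    have hcardA : sA.card ≤ N := by
      have h1 : (Λ ∩ ball t (M+2)).ncard = sA.card := Set.ncard_eq_toFinset_card _ _
      rw [← h1]
      exact hN t
    have hcardB : sB.card ≤ N := by
      have h1 : (Λ ∩ ball (t+τ) (M+1)).ncard = sB.card := Set.ncard_eq_toFinset_card _ _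
      rw [← h1]
      calc (Λ ∩ ball (t+τ) (M+1)).ncard ≤ (Λ ∩ ball (t+τ) (M+2)).ncard := by
            refine Set.ncard_le_ncard ?_ (hLF (t+τ) (M+2))
            exact Set.inter_subset_inter_right _ (ball_subset_ball (by linarith))
        _ ≤ N := hN (t+τ)
    -- tsum to finite sums
    have hFt : (∑' l : Λ, ((‖p (l : Ed d)‖ : ℝ) : ℂ) * φ (t - (l : Ed d)))
        = ∑ x ∈ sA, ((‖p x‖ : ℝ) : ℂ) * φ (t - x) := by
      refine S9.tsum_eq_finsetSum (fun x => ((‖p x‖ : ℝ) : ℂ)) (fun x => φ (t - x)) sA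
        (fun x hx => ((hsAmem x).mp hx).1) ?_
      intro x hxΛ hne
      have hφne : φ (t - x) ≠ 0 := fun h0 => hne (by simp [h0])
      have h1 : dist t x ≤ M := by rw [dist_eq_norm]; exact hMsupp _ hφne
      exact (hsAmem x).mpr ⟨hxΛ, by rw [dist_comm]; linarith⟩
    have hFtτ : (∑' l : Λ, ((‖p (l : Ed d)‖ : ℝ) : ℂ) * φ (t + τ - (l : Ed d)))
        = ∑ y ∈ sB, ((‖p y‖ : ℝ) : ℂ) * φ (t + τ - y) := by
      refine S9.tsum_eq_finsetSum (fun x => ((‖p x‖ : ℝ) : ℂ)) (fun x => φ (t + τ - x)) sB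
        (fun y hy => ((hsBmem y).mp hy).1) ?_
      intro y hyΛ hne
      have hφne : φ (t + τ - y) ≠ 0 := fun h0 => hne (by simp [h0])
      have h1 : dist (t+τ) y ≤ M := by rw [dist_eq_norm]; exact hMsupp _ hφne
      exact (hsBmem y).mpr ⟨hyΛ, by rw [dist_comm]; linarith⟩
    -- injectivity of σ on sAH
    have hinj : ∀ x ∈ sAH, ∀ y ∈ sAH, σ x = σ y → x = y := by
      intro x hx y hy hxy
      obtain ⟨hxΛ, hxh⟩ := hsAHprop x hx
      obtain ⟨hyΛ, hyh⟩ := hsAHprop y hy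
      obtain ⟨_, hdx, _⟩ := hσspec x hxΛ hxh
      obtain ⟨_, hdy, _⟩ := hσspec y hyΛ hyh
      rw [hxy] at hdx
      by_contra hne
      have h1 := hsep _ hxΛ _ hyΛ hne
      have h2 : dist x y = dist (x+τ) (y+τ) := (dist_add_right x y τ).symm
      have h3 : dist (x+τ) (y+τ) ≤ dist (x+τ) (σ y) + dist (σ y) (y+τ) := dist_triangle _ _ _
      rw [dist_comm (σ y) (y+τ)] at h3
      linarith
    have himg : ∑ y ∈ sC, ((‖p y‖ : ℝ) : ℂ) * φ (t + τ - y)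
        = ∑ x ∈ sAH, ((‖p (σ x)‖ : ℝ) : ℂ) * φ (t + τ - σ x) := by
      rw [hsCdef]
      exact Finset.sum_image hinj
    -- terms of sC outside sB vanish
    have hCB : ∑ y ∈ sC ∩ sB, ((‖p y‖ : ℝ) : ℂ) * φ (t + τ - y)
        = ∑ y ∈ sC, ((‖p y‖ : ℝ) : ℂ) * φ (t + τ - y) := by
      refine Finset.sum_subset Finset.inter_subset_left ?_
      intro y hy hny
      have hynB : y ∉ sB := fun h => hny (Finset.mem_inter.mpr ⟨hy, h⟩)
      have hyΛ : y ∈ Λ := by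
        rw [hsCdef, Finset.mem_image] at hy
        obtain ⟨x, hx, hxy⟩ := hy
        obtain ⟨hxΛ, hxh⟩ := hsAHprop x hx
        rw [← hxy]
        exact (hσspec x hxΛ hxh).1
      have hφ0 : φ (t + τ - y) = 0 := by
        by_contra h0
        have h1 : dist (t+τ) y ≤ M := by rw [dist_eq_norm]; exact hMsupp _ h0
        exact hynB ((hsBmem y).mpr ⟨hyΛ, by rw [dist_comm]; linarith⟩)
      rw [hφ0, mul_zero]
    -- leftover terms in sB \ sC are small
    have hleft : ∀ y ∈ sB \ sC, ‖p y‖ ≤ 2*ε' := by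
      intro y hy
      rw [Finset.mem_sdiff] at hy
      obtain ⟨hyB, hynC⟩ := hy
      obtain ⟨hyΛ, hydist⟩ := (hsBmem y).mp hyB
      by_contra hgt
      push_neg at hgt
      have hyh : ε' ≤ ‖p y‖ := by linarith
      obtain ⟨μ, hμΛ, hμd, hμn⟩ := S9.lemA hsep hδ0 hδr ⇑b hψ0 hψ1 hψnn hψsupp hτneg hyΛ hyh
      have hμheavy : ε' ≤ ‖p μ‖ := by linarith
      have hμA : μ ∈ sAH := by
        rw [hsAHdef, Finset.mem_filter]
        refine ⟨?_, hμheavy⟩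
        rw [hsAmem]
        refine ⟨hμΛ, ?_⟩
        have h1 : dist μ t ≤ dist μ (y + -τ) + dist (y + -τ) t := dist_triangle _ _ _
        have h2 : dist (y + -τ) t = dist y (t+τ) := by
          rw [dist_eq_norm, dist_eq_norm]
          congr 1
          abel
        rw [dist_comm μ (y + -τ)] at h1
        rw [h2] at h1
        linarith
      obtain ⟨hσμΛ, hσμd, _⟩ := hσspec μ hμΛ hμheavy
      have hσμy : σ μ = y := by
        by_contra hne
        have h1 := hsep _ hσμΛ _ hyΛ hne
        have h2 : dist (μ+τ) y < 2*δ := by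
          have h3 : dist (μ+τ) y = dist (y + -τ) μ := by
            rw [dist_eq_norm, dist_eq_norm]
            rw [show μ + τ - y = -(y + -τ - μ) from by abel, norm_neg]
          rw [h3]
          exact hμd
        have h4 : dist (σ μ) y ≤ dist (σ μ) (μ+τ) + dist (μ+τ) y := dist_triangle _ _ _
        rw [dist_comm (σ μ) (μ+τ)] at h4
        linarith
      exact hynC (by rw [hsCdef, Finset.mem_image]; exact ⟨μ, hμA, hσμy⟩)
    -- the decomposition
    have hdecomp : (∑ y ∈ sB, ((‖p y‖ : ℝ) : ℂ) * φ (t + τ - y))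
        - ∑ x ∈ sA, ((‖p x‖ : ℝ) : ℂ) * φ (t - x)
        = (∑ x ∈ sAH, (((‖p (σ x)‖ : ℝ) : ℂ) * φ (t + τ - σ x) - ((‖p x‖ : ℝ) : ℂ) * φ (t - x)))
          + ∑ y ∈ sB \ sC, ((‖p y‖ : ℝ) : ℂ) * φ (t + τ - y)
          - ∑ x ∈ sAL, ((‖p x‖ : ℝ) : ℂ) * φ (t - x) := by
      have h1 : ∑ y ∈ sB, ((‖p y‖ : ℝ) : ℂ) * φ (t + τ - y)
          = ∑ y ∈ sB ∩ sC, ((‖p y‖ : ℝ) : ℂ) * φ (t + τ - y)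
            + ∑ y ∈ sB \ sC, ((‖p y‖ : ℝ) : ℂ) * φ (t + τ - y) :=
        (Finset.sum_inter_add_sum_sdiff _ _ _).symm
      have h2 : sB ∩ sC = sC ∩ sB := Finset.inter_comm _ _
      have h3 : ∑ x ∈ sA, ((‖p x‖ : ℝ) : ℂ) * φ (t - x)
          = ∑ x ∈ sAH, ((‖p x‖ : ℝ) : ℂ) * φ (t - x)
            + ∑ x ∈ sAL, ((‖p x‖ : ℝ) : ℂ) * φ (t - x) := by
        rw [hsAHdef, hsALdef]
        exact (Finset.sum_filter_add_sum_filter_not sA heavy _).symm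
      rw [h1, h2, hCB, himg, h3, Finset.sum_sub_distrib]
      ring
    -- per-term bounds and final estimate
    have hterm1 : ∀ x ∈ sAH,
        ‖((‖p (σ x)‖ : ℝ) : ℂ) * φ (t + τ - σ x) - ((‖p x‖ : ℝ) : ℂ) * φ (t - x)‖
          ≤ B * ε' + ε' * Cφ := by
      intro x hx
      obtain ⟨hxΛ, hxh⟩ := hsAHprop x hx
      obtain ⟨hσΛ, hσd, hfwd⟩ := hσspec x hxΛ hxh
      have hbwd := hσback x hxΛ hxh
      have hφdiff : ‖φ (t + τ - σ x) - φ (t - x)‖ ≤ ε' := by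
        have h1 : dist (t + τ - σ x) (t - x) < δ₁ := by
          have h2 : (t + τ - σ x) - (t - x) = (x + τ) - σ x := by abel
          rw [dist_eq_norm, h2, ← dist_eq_norm]
          linarith
        have := hδ₁ h1
        rw [dist_eq_norm] at this
        exact this.le
      have hsplit : ((‖p (σ x)‖ : ℝ) : ℂ) * φ (t + τ - σ x) - ((‖p x‖ : ℝ) : ℂ) * φ (t - x)
          = ((‖p (σ x)‖ : ℝ) : ℂ) * (φ (t + τ - σ x) - φ (t - x))
            + (((‖p (σ x)‖ : ℝ) : ℂ) - ((‖p x‖ : ℝ) : ℂ)) * φ (t - x) := by ring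
      rw [hsplit]
      calc ‖((‖p (σ x)‖ : ℝ) : ℂ) * (φ (t + τ - σ x) - φ (t - x))
            + (((‖p (σ x)‖ : ℝ) : ℂ) - ((‖p x‖ : ℝ) : ℂ)) * φ (t - x)‖
          ≤ ‖((‖p (σ x)‖ : ℝ) : ℂ) * (φ (t + τ - σ x) - φ (t - x))‖
            + ‖(((‖p (σ x)‖ : ℝ) : ℂ) - ((‖p x‖ : ℝ) : ℂ)) * φ (t - x)‖ := norm_add_le _ _
        _ ≤ B * ε' + ε' * Cφ := by
            gcongr
            · rw [norm_mul]
              have h1 : ‖((‖p (σ x)‖ : ℝ) : ℂ)‖ = ‖p (σ x)‖ := by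
                rw [Complex.norm_real, Real.norm_eq_abs, abs_norm]
              rw [h1]
              exact mul_le_mul (hpB _ hσΛ) hφdiff (norm_nonneg _) hB0
            · rw [norm_mul]
              have h1 : ‖((‖p (σ x)‖ : ℝ) : ℂ) - ((‖p x‖ : ℝ) : ℂ)‖ ≤ ε' := by
                rw [← Complex.ofReal_sub, Complex.norm_real, Real.norm_eq_abs]
                rw [abs_le]
                constructor <;> linarith
              exact mul_le_mul h1 (hCφ _) (norm_nonneg _) hε'0.le
    have hterm2 : ∀ y ∈ sB \ sC, ‖((‖p y‖ : ℝ) : ℂ) * φ (t + τ - y)‖ ≤ 2*ε' * Cφ := by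
      intro y hy
      rw [norm_mul]
      have h1 : ‖((‖p y‖ : ℝ) : ℂ)‖ = ‖p y‖ := by
        rw [Complex.norm_real, Real.norm_eq_abs, abs_norm]
      rw [h1]
      exact mul_le_mul (hleft y hy) (hCφ _) (norm_nonneg _) (by linarith)
    have hterm3 : ∀ x ∈ sAL, ‖((‖p x‖ : ℝ) : ℂ) * φ (t - x)‖ ≤ ε' * Cφ := by
      intro x hx
      rw [hsALdef, Finset.mem_filter] at hx
      have hlight : ‖p x‖ ≤ ε' := by
        have h := hx.2
        simp only [hheavydef] at h
        exact (not_le.mp h).le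
      rw [norm_mul]
      have h1 : ‖((‖p x‖ : ℝ) : ℂ)‖ = ‖p x‖ := by
        rw [Complex.norm_real, Real.norm_eq_abs, abs_norm]
      rw [h1]
      exact mul_le_mul hlight (hCφ _) (norm_nonneg _) hε'0.le
    -- put it together
    show ‖(∑' l : Λ, ((‖p (l : Ed d)‖ : ℝ) : ℂ) * φ (t + τ - (l : Ed d)))
        - ∑' l : Λ, ((‖p (l : Ed d)‖ : ℝ) : ℂ) * φ (t - (l : Ed d))‖ < ε
    rw [hFt, hFtτ, hdecomp]
    have hb1 : ‖∑ x ∈ sAH, (((‖p (σ x)‖ : ℝ) : ℂ) * φ (t + τ - σ x)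
        - ((‖p x‖ : ℝ) : ℂ) * φ (t - x))‖ ≤ N * (B * ε' + ε' * Cφ) := by
      calc ‖∑ x ∈ sAH, (((‖p (σ x)‖ : ℝ) : ℂ) * φ (t + τ - σ x)
              - ((‖p x‖ : ℝ) : ℂ) * φ (t - x))‖
          ≤ ∑ x ∈ sAH, ‖((‖p (σ x)‖ : ℝ) : ℂ) * φ (t + τ - σ x)
              - ((‖p x‖ : ℝ) : ℂ) * φ (t - x)‖ := norm_sum_le _ _
        _ ≤ (sAH.card : ℝ) * (B * ε' + ε' * Cφ) := by
            have := Finset.sum_le_card_nsmul _ _ _ hterm1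
            simpa only [nsmul_eq_mul] using this
        _ ≤ N * (B * ε' + ε' * Cφ) := by
            have h1 : sAH.card ≤ N := le_trans (Finset.card_filter_le _ _) hcardA
            have h2 : (0:ℝ) ≤ B * ε' + ε' * Cφ := by positivity
            calc (sAH.card : ℝ) * (B * ε' + ε' * Cφ) ≤ (N : ℝ) * (B * ε' + ε' * Cφ) := by
                  exact mul_le_mul_of_nonneg_right (by exact_mod_cast h1) h2
              _ = N * (B * ε' + ε' * Cφ) := rfl
    have hb2 : ‖∑ y ∈ sB \ sC, ((‖p y‖ : ℝ) : ℂ) * φ (t + τ - y)‖ ≤ N * (2*ε' * Cφ) := by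
      calc ‖∑ y ∈ sB \ sC, ((‖p y‖ : ℝ) : ℂ) * φ (t + τ - y)‖
          ≤ ∑ y ∈ sB \ sC, ‖((‖p y‖ : ℝ) : ℂ) * φ (t + τ - y)‖ := norm_sum_le _ _
        _ ≤ ((sB \ sC).card : ℝ) * (2*ε' * Cφ) := by
            have := Finset.sum_le_card_nsmul _ _ _ hterm2
            simpa only [nsmul_eq_mul] using this
        _ ≤ N * (2*ε' * Cφ) := by
            have h1 : (sB \ sC).card ≤ N := le_trans (Finset.card_le_card (Finset.sdiff_subset)) hcardB
            have h2 : (0:ℝ) ≤ 2*ε' * Cφ := by positivity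
            exact mul_le_mul_of_nonneg_right (by exact_mod_cast h1) h2
    have hb3 : ‖∑ x ∈ sAL, ((‖p x‖ : ℝ) : ℂ) * φ (t - x)‖ ≤ N * (ε' * Cφ) := by
      calc ‖∑ x ∈ sAL, ((‖p x‖ : ℝ) : ℂ) * φ (t - x)‖
          ≤ ∑ x ∈ sAL, ‖((‖p x‖ : ℝ) : ℂ) * φ (t - x)‖ := norm_sum_le _ _
        _ ≤ (sAL.card : ℝ) * (ε' * Cφ) := by
            have := Finset.sum_le_card_nsmul _ _ _ hterm3
            simpa only [nsmul_eq_mul] using this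
        _ ≤ N * (ε' * Cφ) := by
            have h1 : sAL.card ≤ N := le_trans (Finset.card_filter_le _ _) hcardA
            have h2 : (0:ℝ) ≤ ε' * Cφ := by positivity
            exact mul_le_mul_of_nonneg_right (by exact_mod_cast h1) h2
    calc ‖(∑ x ∈ sAH, (((‖p (σ x)‖ : ℝ) : ℂ) * φ (t + τ - σ x) - ((‖p x‖ : ℝ) : ℂ) * φ (t - x)))
          + ∑ y ∈ sB \ sC, ((‖p y‖ : ℝ) : ℂ) * φ (t + τ - y)
          - ∑ x ∈ sAL, ((‖p x‖ : ℝ) : ℂ) * φ (t - x)‖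
        ≤ ‖(∑ x ∈ sAH, (((‖p (σ x)‖ : ℝ) : ℂ) * φ (t + τ - σ x) - ((‖p x‖ : ℝ) : ℂ) * φ (t - x)))
          + ∑ y ∈ sB \ sC, ((‖p y‖ : ℝ) : ℂ) * φ (t + τ - y)‖
          + ‖∑ x ∈ sAL, ((‖p x‖ : ℝ) : ℂ) * φ (t - x)‖ := norm_sub_le _ _
      _ ≤ ‖∑ x ∈ sAH, (((‖p (σ x)‖ : ℝ) : ℂ) * φ (t + τ - σ x) - ((‖p x‖ : ℝ) : ℂ) * φ (t - x))‖
          + ‖∑ y ∈ sB \ sC, ((‖p y‖ : ℝ) : ℂ) * φ (t + τ - y)‖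
          + ‖∑ x ∈ sAL, ((‖p x‖ : ℝ) : ℂ) * φ (t - x)‖ := by
            gcongr
            exact norm_add_le _ _
      _ ≤ N * (B * ε' + ε' * Cφ) + N * (2*ε' * Cφ) + N * (ε' * Cφ) := by
            gcongr
      _ = a * ε' := by rw [hadef]; ring
      _ < ε := hkey

end
end

section
/- Let μ = Σ_{λ∈Λ} p(λ) δ_λ, with p(λ) ∈ ℂ, be an almost periodic measure on ℝ^d with uniformly discrete support Λ. If inf_{λ∈Λ} |p(λ)| ≥ α > 0, then the measure δ_Λ := Σ_{λ∈Λ} δ_λ is almost periodic as well. -/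
open Complex SchwartzMap Metric Set MeasureTheory
open scoped ContDiff ENNReal Pointwise Real

noncomputable section

open Paper
open scoped RealInnerProductSpace

namespace Helper10

variable {d : ℕ}

lemma exists_sep {Λ : Set (Ed d)} (h : 0 < eta Λ) :
    ∃ e : ℝ, 0 < e ∧ ∀ x ∈ Λ, ∀ y ∈ Λ, x ≠ y → e ≤ dist x y := by
  obtain ⟨r, hr0, hr1, hr2⟩ := ENNReal.lt_iff_exists_real_btwn.mp h
  refine ⟨r, ENNReal.ofReal_pos.mp hr1, ?_⟩
  · intro x hx y hy hxy
    have hle : eta Λ ≤ edist x y := by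
      refine iInf_le_of_le ⟨x, hx⟩ (iInf_le_of_le ⟨y, hy⟩ (iInf_le _ hxy))
    have : ENNReal.ofReal r ≤ ENNReal.ofReal (dist x y) := by
      rw [← edist_dist]; exact le_trans hr2.le hle
    exact (ENNReal.ofReal_le_ofReal_iff dist_nonneg).mp this

lemma card_ball_bound (Λ : Set (Ed d)) (e : ℝ) (he : 0 < e)
    (hsep : ∀ x ∈ Λ, ∀ y ∈ Λ, x ≠ y → e ≤ dist x y)
    (hLF : IsLocallyFinite Λ) (R : ℝ) :
    ∃ N : ℕ, ∀ t : Ed d, (Λ ∩ Metric.ball t R).ncard ≤ N := by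
  set v := volume (Metric.ball (0 : Ed d) (e/2)) with hv
  set V := volume (Metric.ball (0 : Ed d) (R + e/2)) with hV
  have hv0 : v ≠ 0 := (measure_ball_pos _ _ (by positivity)).ne'
  have hvt : v ≠ ⊤ := measure_ball_lt_top.ne
  have hVt : V ≠ ⊤ := measure_ball_lt_top.ne
  refine ⟨⌈(V / v).toReal⌉₊, fun t => ?_⟩
  have hfin := hLF t R
  set F := hfin.toFinset with hF
  have hdisj : (F : Set (Ed d)).PairwiseDisjoint (fun x => Metric.ball x (e/2)) := by
    intro x hx y hy hxy
    have hx' := hfin.mem_toFinset.mp hx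
    have hy' := hfin.mem_toFinset.mp hy
    exact Metric.ball_disjoint_ball (by linarith [hsep x hx'.1 y hy'.1 hxy])
  have hsum : volume (⋃ x ∈ F, Metric.ball x (e/2)) = ∑ x ∈ F, volume (Metric.ball x (e/2)) :=
    measure_biUnion_finset hdisj (fun b _ => measurableSet_ball)
  have hsub : (⋃ x ∈ F, Metric.ball x (e/2)) ⊆ Metric.ball t (R + e/2) := by
    intro y hy
    simp only [Set.mem_iUnion] at hy
    obtain ⟨x, hx, hxy⟩ := hy
    have hx' := hfin.mem_toFinset.mp hx
    have h1 : dist x t < R := hx'.2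
    have h2 : dist y x < e/2 := hxy
    exact Metric.mem_ball.mpr (lt_of_le_of_lt (dist_triangle y x t) (by linarith))
  have hcardv : (F.card : ℝ≥0∞) * v ≤ V := by
    have h1 : ∑ x ∈ F, volume (Metric.ball x (e/2)) = F.card * v := by
      rw [Finset.sum_congr rfl fun x _ => Measure.addHaar_ball_center volume x (e/2)]
      simp [Finset.sum_const, nsmul_eq_mul, hv]
    calc (F.card : ℝ≥0∞) * v = volume (⋃ x ∈ F, Metric.ball x (e/2)) := by rw [hsum, h1]
      _ ≤ volume (Metric.ball t (R + e/2)) := measure_mono hsub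
      _ = V := Measure.addHaar_ball_center volume t _
  have hle : (F.card : ℝ≥0∞) ≤ V / v :=
    (ENNReal.le_div_iff_mul_le (Or.inl hv0) (Or.inl hvt)).mpr hcardv
  have hne : V / v ≠ ⊤ := (ENNReal.div_lt_top hVt hv0).ne
  have h2 : (F.card : ℝ) ≤ (V / v).toReal := by
    have := ENNReal.toReal_mono hne hle
    simpa using this
  have h3 : (F.card : ℝ) ≤ (⌈(V / v).toReal⌉₊ : ℝ) := h2.trans (Nat.le_ceil _)
  rw [Set.ncard_eq_toFinset_card _ hfin]
  exact_mod_cast h3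

lemma fiber_card {Λ : Set (Ed d)} (hLF : IsLocallyFinite Λ)
    {φ : Ed d → ℂ} {M : ℝ} (hM : tsupport φ ⊆ Metric.closedBall 0 M)
    {N : ℕ} (hN : ∀ t : Ed d, (Λ ∩ Metric.ball t (M+1)).ncard ≤ N) (s : Ed d) :
    {l : Λ | φ (s - (l : Ed d)) ≠ 0}.Finite ∧ {l : Λ | φ (s - (l : Ed d)) ≠ 0}.ncard ≤ N := by
  have hpre : (Subtype.val ⁻¹' (Λ ∩ Metric.ball s (M+1)) : Set Λ).Finite :=
    (hLF s (M+1)).preimage Subtype.val_injective.injOn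
  have hsub : {l : Λ | φ (s - (l : Ed d)) ≠ 0} ⊆ Subtype.val ⁻¹' (Λ ∩ Metric.ball s (M+1)) := by
    rintro ⟨l, hl⟩ h
    have h1 : s - l ∈ tsupport φ := subset_closure h
    have h2 : ‖s - l‖ ≤ M := mem_closedBall_zero_iff.mp (hM h1)
    refine ⟨hl, ?_⟩
    have h3 : dist l s = ‖s - l‖ := by rw [dist_eq_norm, norm_sub_rev]
    exact Metric.mem_ball.mpr (by rw [h3]; linarith)
  refine ⟨hpre.subset hsub, ?_⟩
  calc {l : Λ | φ (s - (l : Ed d)) ≠ 0}.ncard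
      ≤ (Subtype.val ⁻¹' (Λ ∩ Metric.ball s (M+1)) : Set Λ).ncard :=
        Set.ncard_le_ncard hsub hpre
    _ = (Subtype.val '' (Subtype.val ⁻¹' (Λ ∩ Metric.ball s (M+1)) : Set Λ)).ncard :=
        (Set.ncard_image_of_injective _ Subtype.val_injective).symm
    _ ≤ (Λ ∩ Metric.ball s (M+1)).ncard :=
        Set.ncard_le_ncard (Set.image_preimage_subset _ _) (hLF s (M+1))
    _ ≤ N := hN s

lemma cont_sum {Λ : Set (Ed d)} (hLF : IsLocallyFinite Λ)
    {φ : Ed d → ℂ} (hc : Continuous φ) {M : ℝ} (hM : tsupport φ ⊆ Metric.closedBall 0 M) :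
    Continuous fun t : Ed d => ∑' l : Λ, φ (t - (l : Ed d)) := by
  rw [continuous_iff_continuousAt]
  intro t₀
  have hfin : (Subtype.val ⁻¹' (Λ ∩ Metric.ball t₀ (M+2)) : Set Λ).Finite :=
    (hLF t₀ (M+2)).preimage Subtype.val_injective.injOn
  have heq : ∀ t ∈ Metric.ball t₀ 1,
      (∑' l : Λ, φ (t - (l : Ed d))) = ∑ l ∈ hfin.toFinset, φ (t - (l : Ed d)) := by
    intro t ht
    apply tsum_eq_sum
    intro l hl
    by_contra h0
    apply hl
    rw [Set.Finite.mem_toFinset]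
    have h1 : t - (l : Ed d) ∈ tsupport φ := subset_closure h0
    have h2 : ‖t - (l : Ed d)‖ ≤ M := mem_closedBall_zero_iff.mp (hM h1)
    have h3 : dist (l : Ed d) t = ‖t - (l : Ed d)‖ := by rw [dist_eq_norm, norm_sub_rev]
    refine ⟨l.2, Metric.mem_ball.mpr ?_⟩
    calc dist (l : Ed d) t₀ ≤ dist (l : Ed d) t + dist t t₀ := dist_triangle _ _ _
      _ < M + 2 := by
          have := Metric.mem_ball.mp ht
          rw [h3]; linarith
  have hcs : ContinuousAt (fun t => ∑ l ∈ hfin.toFinset, φ (t - (l : Ed d))) t₀ :=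
    (continuous_finset_sum _ fun l _ => hc.comp (continuous_id.sub continuous_const)).continuousAt
  exact hcs.congr (Filter.eventuallyEq_of_mem (Metric.ball_mem_nhds t₀ one_pos) heq).symm

lemma key_bound {Λ : Set (Ed d)} (hLF : IsLocallyFinite Λ)
    {φ : Ed d → ℂ} {M : ℝ} (hM : tsupport φ ⊆ Metric.closedBall 0 M)
    {N : ℕ} (hN : ∀ t : Ed d, (Λ ∩ Metric.ball t (M+1)).ncard ≤ N)
    {ε' : ℝ} (hε' : 0 ≤ ε') {r : ℝ}
    (hφr : ∀ a b : Ed d, dist a b ≤ r → ‖φ a - φ b‖ ≤ ε')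
    (σ : Λ ≃ Λ) (τ : Ed d) (hσ : ∀ l : Λ, dist ((σ l : Ed d)) ((l : Ed d) + τ) ≤ r)
    (t : Ed d) :
    ‖(∑' l : Λ, φ (t + τ - (l : Ed d))) - ∑' l : Λ, φ (t - (l : Ed d))‖ ≤ 2 * N * ε' := by
  obtain ⟨hfinA, hcardA⟩ := fiber_card hLF hM hN t
  obtain ⟨hfinB', hcardB'⟩ := fiber_card hLF hM hN (t + τ)
  set A : Set Λ := {l : Λ | φ (t - (l : Ed d)) ≠ 0} with hA
  set B : Set Λ := {l : Λ | φ (t + τ - ((σ l : Λ) : Ed d)) ≠ 0} with hB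
  have hBeq : B = ⇑σ ⁻¹' {l : Λ | φ (t + τ - (l : Ed d)) ≠ 0} := rfl
  have hfinB : B.Finite := by rw [hBeq]; exact hfinB'.preimage σ.injective.injOn
  have hcardB : B.ncard ≤ N := by
    have himg : ⇑σ ⁻¹' {l : Λ | φ (t + τ - (l : Ed d)) ≠ 0}
        = ⇑σ.symm '' {l : Λ | φ (t + τ - (l : Ed d)) ≠ 0} := by
      rw [Equiv.image_eq_preimage_symm, Equiv.symm_symm]
    rw [hBeq, himg, Set.ncard_image_of_injective _ σ.symm.injective]
    exact hcardB'
  have hfinU : (A ∪ B).Finite := hfinA.union hfinB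
  set S := hfinU.toFinset with hS
  have hcardS : S.card ≤ 2 * N := by
    rw [hS, ← Set.ncard_eq_toFinset_card _ hfinU]
    calc (A ∪ B).ncard ≤ A.ncard + B.ncard := Set.ncard_union_le _ _
      _ ≤ 2 * N := by omega
  have h1 : (∑' l : Λ, φ (t + τ - (l : Ed d))) = ∑ l ∈ S, φ (t + τ - ((σ l : Λ) : Ed d)) := by
    rw [← Equiv.tsum_eq σ (fun l : Λ => φ (t + τ - (l : Ed d)))]
    apply tsum_eq_sum
    intro l hl
    by_contra h0
    exact hl (hfinU.mem_toFinset.mpr (Or.inr h0))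
  have h2 : (∑' l : Λ, φ (t - (l : Ed d))) = ∑ l ∈ S, φ (t - (l : Ed d)) := by
    apply tsum_eq_sum
    intro l hl
    by_contra h0
    exact hl (hfinU.mem_toFinset.mpr (Or.inl h0))
  rw [h1, h2, ← Finset.sum_sub_distrib]
  calc ‖∑ l ∈ S, (φ (t + τ - ((σ l : Λ) : Ed d)) - φ (t - (l : Ed d)))‖
      ≤ ∑ l ∈ S, ‖φ (t + τ - ((σ l : Λ) : Ed d)) - φ (t - (l : Ed d))‖ := norm_sum_le _ _
    _ ≤ ∑ _l ∈ S, ε' := by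
        apply Finset.sum_le_sum
        intro l _
        apply hφr
        have heq : (t + τ - ((σ l : Λ) : Ed d)) - (t - (l : Ed d))
            = ((l : Ed d) + τ) - ((σ l : Λ) : Ed d) := by abel
        rw [dist_eq_norm, heq, ← dist_eq_norm, dist_comm]
        exact hσ l
    _ = S.card * ε' := by rw [Finset.sum_const, nsmul_eq_mul]
    _ ≤ 2 * N * ε' := by
        apply mul_le_mul_of_nonneg_right _ hε'
        exact_mod_cast hcardS

lemma point_map {Λ : Set (Ed d)} {p : Ed d → ℂ} {α : ℝ}
    (hlow : ∀ l ∈ Λ, α ≤ ‖p l‖)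
    {e r : ℝ} (hr0 : 0 < r) (hre : 2*r < e)
    (hsep : ∀ x ∈ Λ, ∀ y ∈ Λ, x ≠ y → e ≤ dist x y)
    {ψb : ContDiffBump (0 : Ed d)} (hψr : ψb.rOut = r)
    (τ : Ed d)
    (hT : ∀ t : Ed d, ‖(∑' l : Λ, p ↑l * ((ψb (t + τ - ↑l) : ℝ) : ℂ))
        - ∑' l : Λ, p ↑l * ((ψb (t - ↑l) : ℝ) : ℂ)‖ < α/2) :
    ∀ l : Λ, ∃ l' : Λ, dist (l' : Ed d) ((l : Ed d) + τ) < r := by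
  intro l
  have hzero : ∀ x : Ed d, r ≤ ‖x‖ → ψb x = 0 := by
    intro x hx
    apply ψb.zero_of_le_dist
    rwa [hψr, dist_zero_right]
  have hgl : (∑' l' : Λ, p ↑l' * ((ψb ((l : Ed d) - ↑l') : ℝ) : ℂ)) = p ↑l := by
    rw [tsum_eq_single l ?_]
    · rw [sub_self, ψb.one_of_mem_closedBall (Metric.mem_closedBall_self ψb.rIn_pos.le)]
      simp
    · intro l' hne
      have he : e ≤ dist (l : Ed d) (l' : Ed d) :=
        hsep _ l.2 _ l'.2 (fun h => hne (Subtype.ext h.symm))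
      have h0 : ψb ((l : Ed d) - ↑l') = 0 := hzero _ (by rw [← dist_eq_norm]; linarith)
      simp [h0]
  have hne0 : (∑' l' : Λ, p ↑l' * ((ψb ((l : Ed d) + τ - ↑l') : ℝ) : ℂ)) ≠ 0 := by
    intro h0
    have h1 := hT (l : Ed d)
    rw [hgl, h0, zero_sub, norm_neg] at h1
    have h2 := hlow _ l.2
    linarith [norm_nonneg (p (l : Ed d))]
  by_contra hno
  push_neg at hno
  apply hne0
  have hz : ∀ l' : Λ, p ↑l' * ((ψb ((l : Ed d) + τ - ↑l') : ℝ) : ℂ) = 0 := by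
    intro l'
    have h1 : r ≤ ‖(l : Ed d) + τ - ↑l'‖ := by
      have h2 := hno l'
      rw [dist_eq_norm] at h2
      have heq : -((l : Ed d) + τ - ↑l') = (l' : Ed d) - ((l : Ed d) + τ) := by abel
      rw [← norm_neg, heq]
      linarith
    simp [hzero _ h1]
  exact (tsum_congr hz).trans tsum_zero

end Helper10


/-- Proposition 2 iii): if `μ = Σ_{λ∈Λ} p(λ) δ_λ` is an almost periodic
measure with uniformly discrete support and `inf_{λ∈Λ} |p(λ)| ≥ α > 0`, then
`δ_Λ = Σ_{λ∈Λ} δ_λ` is almost periodic. -/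
theorem statement10 (d : ℕ) (Λ : Set (Ed d)) (p : Ed d → ℂ) (α : ℝ)
    (hΛ : IsUniformlyDiscrete Λ)
    (hsupp : ∀ l : Ed d, l ∉ Λ → p l = 0)
    (hap : APMeasure Λ p)
    (hα : 0 < α)
    (hlow : ∀ l ∈ Λ, α ≤ ‖p l‖) :
    APMeasure Λ (fun _ => (1 : ℂ)) := by
  obtain ⟨hLF, hη⟩ := hΛ
  obtain ⟨e, he0, hsep⟩ := Helper10.exists_sep hη
  intro φ hφ hφc
  simp only [one_mul]
  obtain ⟨M, hM0, hM⟩ : ∃ M : ℝ, 0 ≤ M ∧ tsupport φ ⊆ Metric.closedBall 0 M := by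
    obtain ⟨M, hM⟩ := hφc.isBounded.subset_closedBall 0
    exact ⟨max M 0, le_max_right _ _,
      hM.trans (Metric.closedBall_subset_closedBall (le_max_left _ _))⟩
  obtain ⟨N, hN⟩ := Helper10.card_ball_bound Λ e he0 hsep hLF (M + 1)
  refine ⟨Helper10.cont_sum hLF hφ.continuous hM, ?_⟩
  intro ε hε
  have hUC : UniformContinuous φ := hφc.uniformContinuous_of_continuous hφ.continuous
  obtain ⟨r₀, hr₀0, hr₀⟩ := Metric.uniformContinuous_iff.mp hUC (ε / (2*N+1)) (by positivity)
  set r : ℝ := min (r₀/2) (e/3) with hrdef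
  have hr0 : 0 < r := lt_min (by positivity) (by positivity)
  have hre : 2*r < e := by
    have h1 : r ≤ e/3 := min_le_right _ _
    linarith
  have hφr : ∀ a b : Ed d, dist a b ≤ r → ‖φ a - φ b‖ ≤ ε/(2*N+1) := by
    intro a b h
    have h1 : dist a b < r₀ :=
      lt_of_le_of_lt h (lt_of_le_of_lt (min_le_left _ _) (by linarith))
    rw [← dist_eq_norm]
    exact (hr₀ h1).le
  set ψb : ContDiffBump (0 : Ed d) := ⟨r/2, r, by positivity, by linarith⟩ with hψbdef
  set ψ : Ed d → ℂ := fun x => ((ψb x : ℝ) : ℂ) with hψdef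
  have hψs : ContDiff ℝ ∞ ψ := Complex.ofRealCLM.contDiff.comp ψb.contDiff
  have hψc : HasCompactSupport ψ :=
    ψb.hasCompactSupport.comp_left (g := fun y : ℝ => (y : ℂ)) (by simp)
  obtain ⟨hgc, hgap⟩ := hap ψ hψs hψc
  obtain ⟨R, hR0, hRd⟩ := hgap (α/2) (by positivity)
  refine ⟨R, hR0, ?_⟩
  intro x
  obtain ⟨τ, hτT, hτd⟩ := hRd x
  refine ⟨τ, ?_, hτd⟩
  simp only [Set.mem_setOf_eq] at hτT ⊢
  have hτT' : ∀ t : Ed d, ‖(∑' l : Λ, p ↑l * ψ (t + -τ - ↑l)) - ∑' l : Λ, p ↑l * ψ (t - ↑l)‖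
      < α/2 := by
    intro t
    have h1 := hτT (t - τ)
    rw [sub_add_cancel] at h1
    have h2 : t + -τ = t - τ := by abel
    rw [h2, ← norm_neg, neg_sub]
    exact h1
  have hmapτ := Helper10.point_map hlow hr0 hre hsep rfl τ hτT
  have hmapτ' := Helper10.point_map hlow hr0 hre hsep rfl (-τ) hτT'
  choose F hF using hmapτ
  choose F' hF' using hmapτ'
  have huniq : ∀ (y : Ed d) (l₁ l₂ : Λ),
      dist (l₁ : Ed d) y < r → dist (l₂ : Ed d) y < r → l₁ = l₂ := by
    intro y l₁ l₂ h1 h2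
    by_contra hne
    have h3 : e ≤ dist (l₁ : Ed d) (l₂ : Ed d) :=
      hsep _ l₁.2 _ l₂.2 (fun h => hne (Subtype.ext h))
    have h4 : dist (l₁ : Ed d) (l₂ : Ed d) ≤ dist (l₁ : Ed d) y + dist y (l₂ : Ed d) :=
      dist_triangle _ _ _
    rw [dist_comm y (l₂ : Ed d)] at h4
    linarith
  have hleft : ∀ l, F' (F l) = l := by
    intro l
    refine huniq ((F l : Ed d) + -τ) _ _ (hF' (F l)) ?_
    have h1 := hF l
    rw [dist_eq_norm] at h1 ⊢
    have heq : (l : Ed d) - ((F l : Ed d) + -τ) = -((F l : Ed d) - ((l : Ed d) + τ)) := by abel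
    rw [heq, norm_neg]
    exact h1
  have hright : ∀ l, F (F' l) = l := by
    intro l
    refine huniq ((F' l : Ed d) + τ) _ _ (hF (F' l)) ?_
    have h1 := hF' l
    rw [dist_eq_norm] at h1 ⊢
    have heq : (l : Ed d) - ((F' l : Ed d) + τ) = -((F' l : Ed d) - ((l : Ed d) + -τ)) := by abel
    rw [heq, norm_neg]
    exact h1
  set σ : Λ ≃ Λ := ⟨F, F', hleft, hright⟩ with hσdef
  intro t
  have hkb := Helper10.key_bound hLF hM hN (by positivity) hφr σ τ (fun l => (hF l).le) t
  have hlt : (2*N : ℝ) * (ε/(2*↑N+1)) < ε := by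
    rw [mul_div_assoc', div_lt_iff₀ (by positivity)]
    nlinarith [hε]
  calc ‖(∑' l : Λ, φ (t + τ - ↑l)) - ∑' l : Λ, φ (t - ↑l)‖ ≤ 2*N * (ε/(2*↑N+1)) := hkb
    _ < ε := hlt

end
end

section
/- Let μ = Σ_{λ∈Λ} p(λ) δ_λ, with p(λ) ∈ ℂ, be an almost periodic measure on ℝ^d with uniformly discrete support Λ. Then for any ε > 0 and any λ ∈ ℝ^d there is a relatively dense set T ⊂ ℝ^d such that |μ({λ'}) − μ({λ})| < ε for all λ' ∈ T (here μ({x}) denotes the mass of μ at the point x, equal to p(x) for x ∈ Λ and 0 otherwise). -/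
open Complex SchwartzMap Metric Set MeasureTheory
open scoped ContDiff ENNReal Pointwise Real

noncomputable section

open Paper
open scoped RealInnerProductSpace


/-- Proposition 2 iv): for an almost periodic measure
`μ = Σ_{λ∈Λ} p(λ) δ_λ` with uniformly discrete support, for all `ε > 0` and `λ ∈ ℝ^d`
there is a relatively dense set `T` with `|μ({λ'}) − μ({λ})| < ε` for all `λ' ∈ T`
(the mass function being `p`, extended by `0` off `Λ`). -/
theorem statement11 (d : ℕ) (Λ : Set (Ed d)) (p : Ed d → ℂ)
    (hΛ : IsUniformlyDiscrete Λ)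
    (hsupp : ∀ l : Ed d, l ∉ Λ → p l = 0)
    (hap : APMeasure Λ p) :
    ∀ (ε : ℝ), 0 < ε → ∀ l : Ed d,
      ∃ T : Set (Ed d), RelDense T ∧ ∀ l' ∈ T, ‖p l' - p l‖ < ε := by
  intro ε hε l
  obtain ⟨hLF, hηpos0⟩ := hΛ
  -- a real separation constant
  set η0 : ℝ≥0∞ := min (eta Λ) 1 with hη0def
  have hη0pos : 0 < η0 := lt_min hηpos0 zero_lt_one
  have hη0top : η0 ≠ ⊤ := ne_top_of_le_ne_top ENNReal.one_ne_top (min_le_right _ _)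
  set η : ℝ := η0.toReal with hηdef
  have hηpos : 0 < η := ENNReal.toReal_pos hη0pos.ne' hη0top
  have hsep : ∀ x ∈ Λ, ∀ y ∈ Λ, x ≠ y → η ≤ dist x y := by
    intro x hx y hy hxy
    have h1 : eta Λ ≤ edist x y :=
      iInf_le_of_le ⟨x, hx⟩ (iInf_le_of_le ⟨y, hy⟩ (iInf_le _ hxy))
    have h2 : η0 ≤ edist x y := le_trans (min_le_left _ _) h1
    have := ENNReal.toReal_mono (edist_ne_top x y) h2
    rwa [← dist_edist] at this
  by_cases hl : l ∈ Λ
  · -- main case: bump function argument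
    set r : ℝ := η / 8 with hrdef
    have hrpos : 0 < r := by positivity
    have huniq : ∀ t : Ed d, ∀ a ∈ Λ, ∀ b ∈ Λ,
        dist t a < 2 * r → dist t b < 2 * r → a = b := by
      intro t a ha b hb h1 h2
      by_contra hab
      have := hsep a ha b hb hab
      have : dist a b ≤ dist a t + dist t b := dist_triangle a t b
      rw [dist_comm a t] at this
      have := hsep a ha b hb hab
      nlinarith [dist_triangle a t b, dist_comm a t ▸ (rfl : dist a t = dist a t)]
    let f : ContDiffBump (0 : Ed d) := ⟨r, 2 * r, hrpos, by linarith⟩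
    set φC : Ed d → ℂ := fun x => ((f x * f (-x) : ℝ) : ℂ) with hφCdef
    have hφsm : ContDiff ℝ ∞ φC :=
      Complex.ofRealCLM.contDiff.comp
        ((f.contDiff (n := ⊤)).mul ((f.contDiff (n := ⊤)).comp contDiff_neg))
    have hφcs : HasCompactSupport φC :=
      (f.hasCompactSupport.mul_right (f' := fun x => f (-x))).comp_left
        (g := fun r : ℝ => (r : ℂ)) (by simp)
    have hφ0 : φC 0 = 1 := by
      simp only [hφCdef, neg_zero]
      rw [f.one_of_mem_closedBall (mem_closedBall_self hrpos.le)]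
      norm_num
    have hφsymm : ∀ x, φC (-x) = φC x := by
      intro x; simp only [hφCdef, neg_neg]; push_cast; ring
    have hφzero : ∀ x : Ed d, ¬ (‖x‖ < 2 * r) → φC x = 0 := by
      intro x hx
      have : x ∉ Function.support (⇑f) := by
        rw [f.support_eq]; simp only [mem_ball, dist_zero_right]; exact hx
      have hfx : f x = 0 := Function.notMem_support.mp this
      simp [hφCdef, hfx]
    set g : Ed d → ℂ := fun t => ∑' l : Λ, p (l : Ed d) * φC (t - (l : Ed d)) with hgdef
    have hgval : ∀ (t : Ed d) (a : Ed d), a ∈ Λ → dist t a < 2 * r →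
        g t = p a * φC (t - a) := by
      intro t a ha hta
      refine tsum_eq_single (⟨a, ha⟩ : Λ) ?_
      rintro ⟨b, hb⟩ hab
      by_contra h
      have hφ : φC (t - b) ≠ 0 := right_ne_zero_of_mul h
      have : ‖t - b‖ < 2 * r := by
        by_contra hn; exact hφ (hφzero _ hn)
      have : dist t b < 2 * r := by rwa [dist_eq_norm]
      have hba : b = a := huniq t b hb a ha this hta
      exact hab (Subtype.ext hba)
    have hgzero : ∀ t : Ed d, (∀ a ∈ Λ, ¬ dist t a < 2 * r) → g t = 0 := by
      intro t ht
      have : ∀ lp : Λ, p (lp : Ed d) * φC (t - (lp : Ed d)) = 0 := by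
        rintro ⟨b, hb⟩
        have : φC (t - b) = 0 := by
          apply hφzero; rw [← dist_eq_norm]; exact ht b hb
        simp [this]
      calc g t = ∑' lp : Λ, (0 : ℂ) := tsum_congr this
        _ = 0 := tsum_zero
    obtain ⟨-, hP⟩ := hap φC hφsm hφcs
    obtain ⟨R₀, hR₀pos, hR₀⟩ := hP (ε / 2) (half_pos hε)
    refine ⟨{l' | ‖p l' - p l‖ < ε}, ⟨R₀ + 2 * r, by linarith, ?_⟩, fun l' h => h⟩
    intro x₀
    obtain ⟨τ, hτ, hτd⟩ := hR₀ (x₀ - l)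
    simp only [mem_setOf_eq] at hτ
    have hxd : dist x₀ (l + τ) ≤ R₀ := by
      rw [dist_eq_norm] at hτd ⊢
      have : x₀ - (l + τ) = x₀ - l - τ := by abel
      rw [this]; exact hτd
    have hgl : g l = p l := by
      rw [hgval l l hl (by rw [dist_self]; linarith), sub_self, hφ0, mul_one]
    have h1 : ‖g (l + τ) - g l‖ < ε / 2 := hτ l
    rw [hgl] at h1
    by_cases hex : ∃ a ∈ Λ, dist (l + τ) a < 2 * r
    · obtain ⟨a, ha, hda⟩ := hex
      set s : Ed d := l + τ - a with hsdef
      have hns : ‖s‖ < 2 * r := by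
        show ‖l + τ - a‖ < 2 * r
        rw [← dist_eq_norm]; exact hda
      have hgx : g (l + τ) = p a * φC s := hgval (l + τ) a ha hda
      have h2 : ‖g (a - τ + τ) - g (a - τ)‖ < ε / 2 := hτ (a - τ)
      rw [sub_add_cancel] at h2
      have hga : g a = p a := by
        rw [hgval a a ha (by rw [dist_self]; linarith), sub_self, hφ0, mul_one]
      have hls : a - τ = l - s := by rw [hsdef]; abel
      have hgls : g (l - s) = p l * φC s := by
        rw [hgval (l - s) l hl (by rw [dist_comm, dist_eq_norm]; simpa using hns)]
        have : l - s - l = -s := by abel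
        rw [this, hφsymm]
      rw [hga, hls, hgls] at h2
      rw [hgx] at h1
      -- combine
      set c : ℝ := f s * f (-s) with hcdef
      have hφsc : φC s = (c : ℂ) := rfl
      have hc0 : 0 ≤ c := mul_nonneg f.nonneg f.nonneg
      have hc1 : c ≤ 1 := mul_le_one₀ f.le_one f.nonneg f.le_one
      rw [hφsc] at h1 h2
      have hkey : (p a - p l) * (1 + (c : ℂ)) = (p a * c - p l) + (p a - p l * c) := by ring
      have hnorm1c : ‖(1 + (c : ℂ))‖ = 1 + c := by
        rw [show (1 + (c : ℂ)) = ((1 + c : ℝ) : ℂ) by push_cast; ring, Complex.norm_real,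
          Real.norm_eq_abs, _root_.abs_of_nonneg (by linarith : (0:ℝ) ≤ 1 + c)]
      have h3 : ‖p a - p l‖ * (1 + c) ≤ ‖p a * c - p l‖ + ‖p a - p l * c‖ := by
        calc ‖p a - p l‖ * (1 + c) = ‖(p a - p l) * (1 + (c : ℂ))‖ := by
              rw [norm_mul, hnorm1c]
          _ = ‖(p a * c - p l) + (p a - p l * c)‖ := by rw [hkey]
          _ ≤ _ := norm_add_le _ _
      have hfinal : ‖p a - p l‖ < ε := by nlinarith [norm_nonneg (p a - p l)]
      refine ⟨a, hfinal, ?_⟩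
      calc dist x₀ a ≤ dist x₀ (l + τ) + dist (l + τ) a := dist_triangle _ _ _
        _ ≤ R₀ + 2 * r := by linarith
    · push_neg at hex
      have hg0 : g (l + τ) = 0 := hgzero _ (fun a ha => not_lt.mpr (hex a ha))
      rw [hg0, zero_sub, norm_neg] at h1
      have hnot : l + τ ∉ Λ := by
        intro hmem
        have := hex _ hmem
        rw [dist_self] at this
        linarith
      refine ⟨l + τ, ?_, by linarith⟩
      show ‖p (l + τ) - p l‖ < ε
      rw [hsupp _ hnot, zero_sub, norm_neg]
      linarith
  · -- l ∉ Λ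
    by_cases hd : d = 0
    · subst hd
      refine ⟨{l}, ⟨1, one_pos, fun x => ⟨l, rfl, ?_⟩⟩, ?_⟩
      · have : x = l := PiLp.ext fun i => isEmptyElim i
        simp [this]
      · rintro l' rfl
        simpa using hε
    · refine ⟨Λᶜ, ⟨η / 2, by positivity, ?_⟩, ?_⟩
      · intro x₀
        by_cases hx₀ : x₀ ∈ Λ
        · have : Nonempty (Fin d) := ⟨⟨0, Nat.pos_of_ne_zero hd⟩⟩
          obtain ⟨i⟩ := this
          set v : Ed d := (η / 2) • EuclideanSpace.single i (1 : ℝ) with hvdef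
          have hnv : ‖v‖ = η / 2 := by
            rw [hvdef, norm_smul, EuclideanSpace.norm_single, norm_one, mul_one,
              Real.norm_eq_abs, _root_.abs_of_nonneg (by positivity : (0:ℝ) ≤ η / 2)]
          have hvne : v ≠ 0 := by
            intro h; rw [h, norm_zero] at hnv; linarith
          refine ⟨x₀ + v, ?_, ?_⟩
          · intro hmem
            have hne : x₀ ≠ x₀ + v := by
              intro h
              apply hvne
              have := congrArg (· - x₀) h
              simpa using this.symm
            have := hsep x₀ hx₀ (x₀ + v) hmem hne
            rw [dist_self_add_right, hnv] at this
            linarith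
          · rw [dist_self_add_right, hnv]
        · exact ⟨x₀, hx₀, by rw [dist_self]; positivity⟩
      · intro l' hl'
        rw [hsupp _ hl', hsupp _ hl, sub_zero, norm_zero]
        exact hε

end
end

section
/- Let μ₁,…,μ_N be almost periodic measures on ℝ^d with uniformly discrete supports. Then for any vector λ ∈ ℝ^d and any numbers ε > 0, ρ > 0 there is a relatively dense set T ⊂ ℝ^d such that for every λ' ∈ T there exist points λ^{(1)},…,λ^{(N)} with λ^{(n)} ∈ B(λ',ρ) and |μ_n({λ^{(n)}}) − μ_n({λ})| < ε for each n = 1,…,N (here μ({x}) denotes the mass of μ at the point x). -/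
open Complex SchwartzMap Metric Set MeasureTheory
open scoped ContDiff ENNReal Pointwise Real

noncomputable section

open Paper
open scoped RealInnerProductSpace



namespace Statement12Aux

variable {d : ℕ}

lemma apfun_uc {g : Ed d → ℂ} (hg : APFun g) : UniformContinuous g := by
  rw [Metric.uniformContinuous_iff]
  intro ε hε
  obtain ⟨R, hR0, hR⟩ := hg.2 (ε/3) (by linarith)
  have hcomp : IsCompact (Metric.closedBall (0 : Ed d) (R + 1)) := isCompact_closedBall _ _
  have huc := hcomp.uniformContinuousOn_of_continuous hg.1.continuousOn
  rw [uniformContinuousOn_iff] at huc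
  obtain ⟨δ, hδ0, hδ⟩ := huc (ε/3) (by linarith)
  refine ⟨min δ 1, by positivity, fun {a b} hab => ?_⟩
  obtain ⟨τ, hτ, hdist⟩ := hR (-a)
  have hna : ‖a + τ‖ ≤ R := by
    rw [dist_eq_norm] at hdist
    have e : a + τ = -(-a - τ) := by abel
    rw [e, norm_neg]; exact hdist
  have ha : a + τ ∈ Metric.closedBall (0 : Ed d) (R + 1) := by
    simp only [Metric.mem_closedBall, dist_zero_right]; linarith
  have hb : b + τ ∈ Metric.closedBall (0 : Ed d) (R + 1) := by
    simp only [Metric.mem_closedBall, dist_zero_right]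
    have e : b + τ = (a + τ) + (b - a) := by abel
    have h' : ‖b + τ‖ ≤ ‖a + τ‖ + ‖b - a‖ := by rw [e]; exact norm_add_le _ _
    have hba : ‖b - a‖ ≤ 1 := by
      rw [dist_comm, dist_eq_norm] at hab
      have := lt_min_iff.mp hab
      linarith [this.2]
    linarith
  have h1 : ‖g (a + τ) - g a‖ < ε/3 := hτ a
  have h2 : ‖g (b + τ) - g b‖ < ε/3 := hτ b
  have h3 : dist (g (a + τ)) (g (b + τ)) < ε/3 := by
    apply hδ _ ha _ hb
    have : dist (a + τ) (b + τ) = dist a b := dist_add_right a b τ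
    rw [this]
    exact lt_of_lt_of_le hab (min_le_left _ _)
  rw [dist_eq_norm] at h3 ⊢
  have e : g a - g b = -(g (a+τ) - g a) + (g (a+τ) - g (b+τ)) + (g (b+τ) - g b) := by ring
  calc ‖g a - g b‖ = ‖-(g (a+τ) - g a) + (g (a+τ) - g (b+τ)) + (g (b+τ) - g b)‖ := by rw [e]
  _ ≤ ‖-(g (a+τ) - g a) + (g (a+τ) - g (b+τ))‖ + ‖g (b+τ) - g b‖ := norm_add_le _ _
  _ ≤ ‖-(g (a+τ) - g a)‖ + ‖g (a+τ) - g (b+τ)‖ + ‖g (b+τ) - g b‖ := by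
      gcongr; exact norm_add_le _ _
  _ < ε/3 + ε/3 + ε/3 := by rw [norm_neg]; gcongr
  _ = ε := by ring

lemma apfun_net {g : Ed d → ℂ} (hg : APFun g) {ε : ℝ} (hε : 0 < ε) :
    ∃ S : Set (Ed d), S.Finite ∧ ∀ s : Ed d, ∃ σ ∈ S, ∀ t, ‖g (t + s) - g (t + σ)‖ ≤ ε := by
  obtain ⟨R, hR0, hR⟩ := hg.2 (ε/2) (by linarith)
  have huc := apfun_uc hg
  rw [Metric.uniformContinuous_iff] at huc
  obtain ⟨δ, hδ0, hδ⟩ := huc (ε/2) (by linarith)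
  have htb : TotallyBounded (Metric.closedBall (0 : Ed d) R) :=
    (isCompact_closedBall _ _).totallyBounded
  rw [totallyBounded_iff] at htb
  obtain ⟨S, hSfin, hScov⟩ := htb δ hδ0
  refine ⟨S, hSfin, fun s => ?_⟩
  obtain ⟨τ, hτ, hdist⟩ := hR s
  have hu : s - τ ∈ Metric.closedBall (0 : Ed d) R := by
    simp only [Metric.mem_closedBall, dist_zero_right]
    rw [dist_eq_norm] at hdist; exact hdist
  obtain ⟨σ, hσS, hσ⟩ := by
    have := hScov hu
    simpa only [Set.mem_iUnion, exists_prop] using this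
  refine ⟨σ, hσS, fun t => ?_⟩
  have e1 : t + s = (t + (s - τ)) + τ := by abel
  have h1 : ‖g (t + s) - g (t + (s - τ))‖ < ε/2 := by rw [e1]; exact hτ (t + (s - τ))
  have h2 : ‖g (t + (s - τ)) - g (t + σ)‖ < ε/2 := by
    have hd : dist (t + (s - τ)) (t + σ) < δ := by
      rw [dist_add_left]
      exact Metric.mem_ball.mp hσ
    have := hδ hd
    rw [dist_eq_norm] at this; exact this
  have e : g (t + s) - g (t + σ)
      = (g (t + s) - g (t + (s - τ))) + (g (t + (s - τ)) - g (t + σ)) := by ring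
  rw [e]
  calc ‖_ + _‖ ≤ _ + _ := norm_add_le _ _
  _ ≤ ε := by linarith

lemma common_ap {N : ℕ} {g : Fin N → Ed d → ℂ} (hg : ∀ n, APFun (g n))
    {ε : ℝ} (hε : 0 < ε) :
    RelDense {τ : Ed d | ∀ n t, ‖g n (t + τ) - g n t‖ < ε} := by
  have hnet : ∀ n : Fin N, ∃ S : Set (Ed d), S.Finite ∧
      ∀ s : Ed d, ∃ σ ∈ S, ∀ t, ‖g n (t + s) - g n (t + σ)‖ ≤ ε/3 :=
    fun n => apfun_net (hg n) (by linarith)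
  choose S hSfin hSnet using hnet
  have hchoice : ∀ (s : Ed d) (n : Fin N),
      ∃ σ, σ ∈ S n ∧ ∀ t, ‖g n (t + s) - g n (t + σ)‖ ≤ ε/3 := by
    intro s n; obtain ⟨σ, h1, h2⟩ := hSnet n s; exact ⟨σ, h1, h2⟩
  choose Φ hΦmem hΦ using hchoice
  have hrange : (Set.range Φ).Finite := by
    apply Set.Finite.subset (Set.Finite.pi (fun n => hSfin n))
    rintro _ ⟨s, rfl⟩
    intro n _
    exact hΦmem s n
  classical
  set rep : (Fin N → Ed d) → Ed d := fun c => if h : c ∈ Set.range Φ then h.choose else 0 with hrep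
  have hrepΦ : ∀ s : Ed d, Φ (rep (Φ s)) = Φ s := by
    intro s
    have h : Φ s ∈ Set.range Φ := ⟨s, rfl⟩
    simp only [hrep, dif_pos h]
    exact h.choose_spec
  have hbdd : ∃ R : ℝ, ∀ s : Ed d, ‖rep (Φ s)‖ ≤ R := by
    have hfin : ((fun c => ‖rep c‖) '' Set.range Φ).Finite := hrange.image _
    obtain ⟨R, hR⟩ := hfin.bddAbove
    exact ⟨R, fun s => hR ⟨Φ s, ⟨s, rfl⟩, rfl⟩⟩
  obtain ⟨R, hRb⟩ := hbdd
  refine ⟨max R 1, lt_of_lt_of_le one_pos (le_max_right _ _), fun x => ?_⟩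
  refine ⟨x - rep (Φ x), ?_, ?_⟩
  · intro n t
    set r := rep (Φ x) with hr
    have h1 : ∀ t', ‖g n (t' + x) - g n (t' + Φ x n)‖ ≤ ε/3 := hΦ x n
    have h2 : ∀ t', ‖g n (t' + r) - g n (t' + Φ x n)‖ ≤ ε/3 := by
      intro t'
      have := hΦ r n t'
      rwa [hrepΦ x] at this
    have e1 : t + (x - r) = (t - r) + x := by abel
    have e2 : t = (t - r) + r := by abel
    have e3 : g n ((t - r) + x) - g n ((t - r) + r)
        = (g n ((t - r) + x) - g n ((t - r) + Φ x n))
          - (g n ((t - r) + r) - g n ((t - r) + Φ x n)) := by ring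
    rw [e1]
    nth_rewrite 2 [e2]
    rw [e3]
    calc ‖_ - _‖ ≤ ‖g n ((t - r) + x) - g n ((t - r) + Φ x n)‖
        + ‖g n ((t - r) + r) - g n ((t - r) + Φ x n)‖ := norm_sub_le _ _
    _ ≤ ε/3 + ε/3 := by gcongr; exacts [h1 (t - r), h2 (t - r)]
    _ < ε := by linarith
  · rw [dist_eq_norm]
    have e : x - (x - rep (Φ x)) = rep (Φ x) := by abel
    rw [e]
    exact le_trans (hRb x) (le_max_left _ _)

lemma eval_lemma {Λ : Set (Ed d)} {p : Ed d → ℂ} {φ : Ed d → ℂ} {r : ℝ}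
    (hp : ∀ x, x ∉ Λ → p x = 0)
    (hφ : ∀ x : Ed d, r ≤ ‖x‖ → φ x = 0) (t l₀ : Ed d)
    (hsingle : ∀ x ∈ Λ, ‖t - x‖ < r → x = l₀) :
    ∑' x : Λ, p x * φ (t - x) = p l₀ * φ (t - l₀) := by
  by_cases h : l₀ ∈ Λ
  · rw [tsum_eq_single (⟨l₀, h⟩ : Λ)]
    intro b hb
    have hbφ : φ (t - b) = 0 := by
      by_contra hne
      have hlt : ‖t - (b : Ed d)‖ < r := by
        by_contra hge; exact hne (hφ _ (le_of_not_gt hge))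
      exact hb (Subtype.ext (hsingle b b.2 hlt))
    rw [hbφ, mul_zero]
  · have hz : ∀ x : Λ, p x * φ (t - x) = 0 := by
      intro x
      have hxφ : φ (t - (x : Ed d)) = 0 := by
        by_contra hne
        have hlt : ‖t - (x : Ed d)‖ < r := by
          by_contra hge; exact hne (hφ _ (le_of_not_gt hge))
        exact h (hsingle x x.2 hlt ▸ x.2)
      rw [hxφ, mul_zero]
    rw [hp l₀ h, zero_mul]
    calc ∑' x : Λ, p x * φ (t - x) = ∑' _ : Λ, (0 : ℂ) := tsum_congr hz
    _ = 0 := tsum_zero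

end Statement12Aux

open Statement12Aux in
/-- Proposition 2 v): for almost periodic measures `μ_1, …, μ_N` with
uniformly discrete supports, for any `λ ∈ ℝ^d`, `ε > 0`, `ρ > 0` there is a relatively
dense set `T` such that for each `λ' ∈ T` and each `n` there is
`λ^{(n)} ∈ B(λ', ρ)` with `|μ_n({λ^{(n)}}) − μ_n({λ})| < ε`. -/
theorem statement12 (d N : ℕ) (Λ : Fin N → Set (Ed d)) (p : Fin N → Ed d → ℂ)
    (hΛ : ∀ n, IsUniformlyDiscrete (Λ n))
    (hsupp : ∀ n, ∀ l : Ed d, l ∉ Λ n → p n l = 0)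
    (hap : ∀ n, APMeasure (Λ n) (p n)) :
    ∀ (l : Ed d) (ε ρ : ℝ), 0 < ε → 0 < ρ →
      ∃ T : Set (Ed d), RelDense T ∧
        ∀ l' ∈ T, ∀ n : Fin N,
          ∃ ln : Ed d, ln ∈ Metric.ball l' ρ ∧ ‖p n ln - p n l‖ < ε := by
  classical
  intro l ε ρ hε hρ
  -- separation constants
  have hsep : ∀ n, ∃ c : ℝ, 0 < c ∧ ∀ x ∈ Λ n, ∀ y ∈ Λ n, x ≠ y → c ≤ dist x y := by
    intro n
    have hη : 0 < eta (Λ n) := (hΛ n).2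
    refine ⟨(min (eta (Λ n)) 1).toReal, ?_, ?_⟩
    · apply ENNReal.toReal_pos
      · exact (lt_min hη one_pos).ne'
      · exact ne_top_of_le_ne_top (by simp) (min_le_right _ _)
    · intro x hx y hy hxy
      have h1 : eta (Λ n) ≤ edist x y := by
        refine iInf_le_of_le ⟨x, hx⟩ (iInf_le_of_le ⟨y, hy⟩ ?_)
        exact iInf_le_of_le hxy le_rfl
      have h2 : min (eta (Λ n)) 1 ≤ edist x y := le_trans (min_le_left _ _) h1
      rw [dist_edist]
      exact ENNReal.toReal_mono (edist_ne_top x y) h2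
  choose c hc_pos hc using hsep
  -- isolation at l
  have hiso : ∀ n, ∃ m : ℝ, 0 < m ∧ ∀ x ∈ Λ n, dist l x < m → x = l := by
    intro n
    have hF : ((Λ n ∩ Metric.ball l 1) \ {l}).Finite := ((hΛ n).1 l 1).diff
    set s : Finset ℝ := insert 1 (hF.toFinset.image (fun x => dist l x)) with hs
    have hne : s.Nonempty := ⟨1, Finset.mem_insert_self _ _⟩
    have hall : ∀ a ∈ s, 0 < a := by
      intro a ha
      rw [hs] at ha
      rcases Finset.mem_insert.mp ha with h | h
      · rw [h]; exact one_pos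
      · obtain ⟨x, hx, rfl⟩ := Finset.mem_image.mp h
        rw [Set.Finite.mem_toFinset] at hx
        have : x ≠ l := by
          intro h'; exact hx.2 (by simp [h'])
        exact dist_pos.mpr (fun h' => this h'.symm)
    refine ⟨s.min' hne, hall _ (s.min'_mem hne), fun x hx hlt => ?_⟩
    by_contra hxl
    have h1 : s.min' hne ≤ 1 := Finset.min'_le _ _ (Finset.mem_insert_self _ _)
    have hx1 : x ∈ Metric.ball l 1 := by
      rw [Metric.mem_ball, dist_comm]
      exact lt_of_lt_of_le hlt h1
    have hxs : dist l x ∈ s := by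
      rw [hs]
      apply Finset.mem_insert_of_mem
      apply Finset.mem_image_of_mem
      rw [Set.Finite.mem_toFinset]
      exact ⟨⟨hx, hx1⟩, by simp [hxl]⟩
    exact absurd (Finset.min'_le _ _ hxs) (not_le.mpr hlt)
  choose m hm_pos hm using hiso
  -- the radius r
  obtain ⟨r, hr_pos, hrρ, hrc, hrm⟩ :
      ∃ r : ℝ, 0 < r ∧ r ≤ ρ ∧ (∀ n, 2*r ≤ c n) ∧ (∀ n, 2*r ≤ m n) := by
    set s : Finset ℝ := insert ρ (Finset.univ.image (fun n => min (c n) (m n) / 2)) with hs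
    have hne : s.Nonempty := ⟨ρ, Finset.mem_insert_self _ _⟩
    have hall : ∀ a ∈ s, 0 < a := by
      intro a ha
      rcases Finset.mem_insert.mp ha with h | h
      · rw [h]; exact hρ
      · obtain ⟨n, _, rfl⟩ := Finset.mem_image.mp h
        have := lt_min (hc_pos n) (hm_pos n)
        positivity
    refine ⟨s.min' hne, hall _ (s.min'_mem hne),
      Finset.min'_le _ _ (Finset.mem_insert_self _ _), fun n => ?_, fun n => ?_⟩
    · have h1 : s.min' hne ≤ min (c n) (m n) / 2 := by
        apply Finset.min'_le
        exact Finset.mem_insert_of_mem (Finset.mem_image_of_mem _ (Finset.mem_univ n))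
      have h2 : min (c n) (m n) ≤ c n := min_le_left _ _
      linarith
    · have h1 : s.min' hne ≤ min (c n) (m n) / 2 := by
        apply Finset.min'_le
        exact Finset.mem_insert_of_mem (Finset.mem_image_of_mem _ (Finset.mem_univ n))
      have h2 : min (c n) (m n) ≤ m n := min_le_right _ _
      linarith
  -- the bump function
  set b : ContDiffBump (0 : Ed d) := ⟨r/2, r, by positivity, by linarith⟩ with hb
  set φ : Ed d → ℂ := fun x => ((b x : ℝ) : ℂ) with hφdef
  have hφ0 : φ 0 = 1 := by
    rw [hφdef]
    simp only
    rw [b.one_of_mem_closedBall (by simp [Metric.mem_closedBall]; positivity)]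
    norm_num
  have hφr : ∀ x : Ed d, r ≤ ‖x‖ → φ x = 0 := by
    intro x hx
    rw [hφdef]
    simp only
    rw [b.zero_of_le_dist (by rwa [hb, dist_zero_right])]
    norm_num
  have hφeven : ∀ x : Ed d, φ (-x) = φ x := by
    intro x
    rw [hφdef]
    simp only
    have := b.sub x
    rw [zero_sub, zero_add] at this
    rw [this]
  have hsmooth : ContDiff ℝ ∞ φ := Complex.ofRealCLM.contDiff.comp b.contDiff
  have hcs : HasCompactSupport φ :=
    b.hasCompactSupport.comp_left (g := Complex.ofReal) Complex.ofReal_zero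
  -- the almost periodic functions
  set g : Fin N → Ed d → ℂ := fun n t => ∑' x : (Λ n), p n x * φ (t - x) with hgdef
  have hg : ∀ n, APFun (g n) := fun n => hap n φ hsmooth hcs
  obtain ⟨R, hR0, hR⟩ := common_ap hg (show (0:ℝ) < ε/2 by linarith)
  refine ⟨(fun τ => l + τ) '' {τ : Ed d | ∀ n t, ‖g n (t + τ) - g n t‖ < ε/2}, ?_, ?_⟩
  · refine ⟨R, hR0, fun x => ?_⟩
    obtain ⟨τ, hτ, hd⟩ := hR (x - l)
    refine ⟨l + τ, Set.mem_image_of_mem _ hτ, ?_⟩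
    rw [dist_eq_norm] at hd ⊢
    have e : x - (l + τ) = (x - l) - τ := by abel
    rw [e]; exact hd
  · rintro l' ⟨τ, hτ, rfl⟩ n
    -- evaluation at l
    have E4 : g n l = p n l := by
      rw [hgdef]
      simp only
      rw [eval_lemma (hsupp n) hφr l l ?_]
      · rw [sub_self, hφ0, mul_one]
      · intro x hx hlt
        refine (hm n x hx ?_).symm ▸ rfl
        calc dist l x = ‖l - x‖ := dist_eq_norm _ _
        _ < r := hlt
        _ < m n := by have := hrm n; linarith
    by_cases hex : ∃ x ∈ Λ n, x ∈ Metric.ball (l + τ) r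
    · obtain ⟨ls, hlsΛ, hlsb⟩ := hex
      set δ : Ed d := ls - (l + τ) with hδdef
      have hδ : ‖δ‖ < r := by
        rw [hδdef]
        rw [Metric.mem_ball, dist_eq_norm] at hlsb
        exact hlsb
      have E1 : g n (l + δ) = p n l * φ δ := by
        rw [hgdef]
        simp only
        rw [eval_lemma (hsupp n) hφr (l + δ) l ?_]
        · rw [add_sub_cancel_left]
        · intro x hx hlt
          refine (hm n x hx ?_).symm ▸ rfl
          have e : l - x = (l + δ - x) - δ := by abel
          calc dist l x = ‖l - x‖ := dist_eq_norm _ _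
          _ = ‖(l + δ - x) - δ‖ := by rw [e]
          _ ≤ ‖l + δ - x‖ + ‖δ‖ := norm_sub_le _ _
          _ < r + r := by gcongr
          _ ≤ m n := by have := hrm n; linarith
      have E2 : g n ls = p n ls := by
        rw [hgdef]
        simp only
        rw [eval_lemma (hsupp n) hφr ls ls ?_]
        · rw [sub_self, hφ0, mul_one]
        · intro x hx hlt
          by_contra hne
          have := hc n ls hlsΛ x hx (fun h => hne h.symm)
          rw [dist_eq_norm] at this
          have h2r := hrc n
          linarith
      have E3 : g n (l + τ) = p n ls * φ δ := by
        rw [hgdef]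
        simp only
        rw [eval_lemma (hsupp n) hφr (l + τ) ls ?_]
        · have e : l + τ - ls = -δ := by rw [hδdef]; abel
          rw [e, hφeven]
        · intro x hx hlt
          by_contra hne
          have h1 := hc n x hx ls hlsΛ hne
          have h2 : dist x ls ≤ dist x (l + τ) + dist (l + τ) ls := dist_triangle _ _ _
          have h3 : dist x (l + τ) < r := by rw [dist_comm, dist_eq_norm]; exact hlt
          have h4 : dist (l + τ) ls < r := by rw [dist_comm]; exact Metric.mem_ball.mp hlsb
          have h2r := hrc n
          linarith
      have h1 : ‖p n ls - p n l * φ δ‖ < ε/2 := by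
        have := hτ n (l + δ)
        have e : (l + δ) + τ = ls := by rw [hδdef]; abel
        rw [e, E2, E1] at this
        exact this
      have h2 : ‖p n ls * φ δ - p n l‖ < ε/2 := by
        have := hτ n l
        rw [E3, E4] at this
        exact this
      refine ⟨ls, ?_, ?_⟩
      · rw [Metric.mem_ball]
        calc dist ls (l + τ) < r := hlsb
        _ ≤ ρ := hrρ
      · set A := p n ls
        set B := p n l
        set C : ℂ := φ δ with hC
        have hcval : C = ((b δ : ℝ) : ℂ) := rfl
        have hc0 : (0:ℝ) ≤ b δ := b.nonneg
        have hnorm1C : ‖(1:ℂ) + C‖ = 1 + b δ := by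
          rw [hcval]
          rw [show (1:ℂ) + ((b δ : ℝ) : ℂ) = (((1 + b δ : ℝ)) : ℂ) by push_cast; ring]
          rw [Complex.norm_real]
          exact abs_of_nonneg (by linarith)
        have key : (A - B * C) + (A * C - B) = (1 + C) * (A - B) := by ring
        have hle : ‖A - B‖ ≤ ‖(1 + C) * (A - B)‖ := by
          rw [norm_mul, hnorm1C]
          nlinarith [norm_nonneg (A - B)]
        calc ‖A - B‖ ≤ ‖(1 + C) * (A - B)‖ := hle
        _ = ‖(A - B * C) + (A * C - B)‖ := by rw [key]
        _ ≤ ‖A - B * C‖ + ‖A * C - B‖ := norm_add_le _ _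
        _ < ε/2 + ε/2 := by gcongr
        _ = ε := by ring
    · push_neg at hex
      have hnotin : l + τ ∉ Λ n := by
        intro h
        exact hex _ h (Metric.mem_ball_self hr_pos)
      have E5 : g n (l + τ) = 0 := by
        rw [hgdef]
        simp only
        rw [eval_lemma (hsupp n) hφr (l + τ) (l + τ) ?_]
        · rw [hsupp n _ hnotin, zero_mul]
        · intro x hx hlt
          exfalso
          apply hex x hx
          rw [Metric.mem_ball, dist_comm, dist_eq_norm]
          exact hlt
      have h2 : ‖p n (l + τ) - p n l‖ < ε := by
        have := hτ n l
        rw [E5, E4] at this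
        rw [hsupp n _ hnotin]
        rw [zero_sub] at this ⊢
        linarith
      exact ⟨l + τ, Metric.mem_ball_self hρ, h2⟩

end
end
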